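/- arXiv:1506.05064 — 4 statements merged into one kernel-verified Lean document; each statement's English description precedes it below -/
import Mathlib

section
/- Let X be a connected finite simple graph that is not isomorphic to a cycle C_n, and let C_X be the graph obtained from X by replacing every edge p_i p_j of X with a path p_i q_{ik} r_k q_{jk} p_j of length four (where r_k and the q-vertices are new vertices, one r_k per edge and two q-vertices per edge). Then the automorphism group of C_X is isomorphic to the automorphism group of X. -/
set_option linter.unreachableTactic false
set_option linter.unusedTactic false

/-- The vertex set of the graph `C_X`: the original vertices `P`, the
intermediate vertices `Q` (one for each incidence of a vertex with an edge),
and the middle vertices `R` (one for each edge). -/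
def CXVert {V : Type} (X : SimpleGraph V) : Type :=
  V ⊕ ({p : V × X.edgeSet // p.1 ∈ (p.2 : Sym2 V)} ⊕ X.edgeSet)

/-- The graph `C_X` obtained from `X` by replacing every edge `p_i p_j` by a
path `p_i q_{ik} r_k q_{jk} p_j` of length four. -/
def CX {V : Type} (X : SimpleGraph V) : SimpleGraph (CXVert X) :=
  SimpleGraph.fromRel (fun a b =>
    match a, b with
    | Sum.inl v, Sum.inr (Sum.inl q) => v = q.1.1
    | Sum.inr (Sum.inl q), Sum.inr (Sum.inr r) => q.1.2 = r
    | _, _ => False)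

namespace CXProof

variable {V : Type} {X : SimpleGraph V}

abbrev QV (X : SimpleGraph V) := {p : V × X.edgeSet // p.1 ∈ (p.2 : Sym2 V)}

lemma inj_ll {v w : V} (h : (Sum.inl v : CXVert X) = Sum.inl w) : v = w :=
  Sum.inl_injective h
lemma inj_qq {q q' : QV X} (h : (Sum.inr (Sum.inl q) : CXVert X) = Sum.inr (Sum.inl q')) :
    q = q' := Sum.inl_injective (Sum.inr_injective h)
lemma inj_rr {e e' : X.edgeSet} (h : (Sum.inr (Sum.inr e) : CXVert X) = Sum.inr (Sum.inr e')) :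
    e = e' := Sum.inr_injective (Sum.inr_injective h)
lemma ne_qr {q : QV X} {e : X.edgeSet} :
    (Sum.inr (Sum.inl q) : CXVert X) ≠ Sum.inr (Sum.inr e) :=
  fun h => Sum.inl_ne_inr (Sum.inr_injective h)
lemma ne_lq {v : V} {q : QV X} : (Sum.inl v : CXVert X) ≠ Sum.inr (Sum.inl q) :=
  Sum.inl_ne_inr
lemma ne_lr {v : V} {e : X.edgeSet} : (Sum.inl v : CXVert X) ≠ Sum.inr (Sum.inr e) :=
  Sum.inl_ne_inr

@[simp] lemma adj_ll {v w : V} : ¬ (CX X).Adj (Sum.inl v) (Sum.inl w) := by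
  simp only [CX, SimpleGraph.fromRel_adj]
  rintro ⟨-, h | h⟩ <;> exact h

@[simp] lemma adj_lq {v : V} {q : QV X} :
    (CX X).Adj (Sum.inl v) (Sum.inr (Sum.inl q)) ↔ q.1.1 = v := by
  simp only [CX, SimpleGraph.fromRel_adj]
  constructor
  · rintro ⟨-, h | h⟩; exacts [h.symm, h.elim]
  · intro h; exact ⟨ne_lq, Or.inl h.symm⟩

@[simp] lemma adj_ql {v : V} {q : QV X} :
    (CX X).Adj (Sum.inr (Sum.inl q)) (Sum.inl v) ↔ q.1.1 = v := by
  exact ⟨fun h => adj_lq.mp h.symm, fun h => (adj_lq.mpr h).symm⟩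

@[simp] lemma adj_lr {v : V} {e : X.edgeSet} :
    ¬ (CX X).Adj (Sum.inl v) (Sum.inr (Sum.inr e)) := by
  simp only [CX, SimpleGraph.fromRel_adj]
  rintro ⟨-, h | h⟩ <;> exact h

@[simp] lemma adj_rl {v : V} {e : X.edgeSet} :
    ¬ (CX X).Adj (Sum.inr (Sum.inr e)) (Sum.inl v) := by
  exact fun h => adj_lr h.symm

@[simp] lemma adj_qq {q q' : QV X} :
    ¬ (CX X).Adj (Sum.inr (Sum.inl q)) (Sum.inr (Sum.inl q')) := by
  simp only [CX, SimpleGraph.fromRel_adj]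
  rintro ⟨-, h | h⟩ <;> exact h

@[simp] lemma adj_qr {q : QV X} {e : X.edgeSet} :
    (CX X).Adj (Sum.inr (Sum.inl q)) (Sum.inr (Sum.inr e)) ↔ q.1.2 = e := by
  simp only [CX, SimpleGraph.fromRel_adj]
  constructor
  · rintro ⟨-, h | h⟩; exacts [h, h.elim]
  · intro h; exact ⟨ne_qr, Or.inl h⟩

@[simp] lemma adj_rq {q : QV X} {e : X.edgeSet} :
    (CX X).Adj (Sum.inr (Sum.inr e)) (Sum.inr (Sum.inl q)) ↔ q.1.2 = e := by
  exact ⟨fun h => adj_qr.mp h.symm, fun h => (adj_qr.mpr h).symm⟩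

@[simp] lemma adj_rr {e e' : X.edgeSet} :
    ¬ (CX X).Adj (Sum.inr (Sum.inr e)) (Sum.inr (Sum.inr e')) := by
  simp only [CX, SimpleGraph.fromRel_adj]
  rintro ⟨-, h | h⟩ <;> exact h

/-- neighbors of an `inl` vertex are `Q` vertices over it -/
lemma adj_inl_iff {v : V} {y : CXVert X} :
    (CX X).Adj (Sum.inl v) y ↔ ∃ q : QV X, q.1.1 = v ∧ y = Sum.inr (Sum.inl q) := by
  cases y with
  | inl w => simp
  | inr y => cases y with
    | inl q =>
      rw [adj_lq]
      constructor
      · intro h; exact ⟨q, h, rfl⟩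
      · rintro ⟨q', h, heq⟩
        obtain rfl : q = q' := inj_qq heq
        exact h
    | inr e =>
      simp only [adj_lr, false_iff]
      rintro ⟨q', h, heq⟩; exact ne_qr heq.symm

lemma adj_q_iff {q : QV X} {y : CXVert X} :
    (CX X).Adj (Sum.inr (Sum.inl q)) y ↔ y = Sum.inl q.1.1 ∨ y = Sum.inr (Sum.inr q.1.2) := by
  cases y with
  | inl w => rw [adj_ql]; constructor
             · intro h; exact Or.inl (by rw [h])
             · rintro (h | h)
               · exact inj_ll h.symm
               · exact absurd h (Sum.inl_ne_inr)
  | inr y => cases y with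
    | inl q' => simp only [adj_qq, false_iff]
                rintro (h | h)
                · exact Sum.inr_ne_inl h
                · exact ne_qr h
    | inr e => rw [adj_qr]; constructor
               · intro h; exact Or.inr (by rw [h])
               · rintro (h | h)
                 · exact absurd h.symm Sum.inl_ne_inr
                 · exact inj_rr h.symm

lemma adj_r_iff {e : X.edgeSet} {y : CXVert X} :
    (CX X).Adj (Sum.inr (Sum.inr e)) y ↔ ∃ q : QV X, q.1.2 = e ∧ y = Sum.inr (Sum.inl q) := by
  cases y with
  | inl w => simp only [adj_rl, false_iff]; rintro ⟨q', h, heq⟩; exact ne_lq heq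
  | inr y => cases y with
    | inl q' =>
      rw [adj_rq]
      constructor
      · intro h; exact ⟨q', h, rfl⟩
      · rintro ⟨q'', h, heq⟩
        obtain rfl : q' = q'' := inj_qq heq
        exact h
    | inr e' =>
      simp only [adj_rr, false_iff]
      rintro ⟨q', h, heq⟩; exact ne_qr heq.symm

end CXProof

namespace CXProof

variable {V : Type} {X : SimpleGraph V}

/-- `x` has exactly two (distinct) neighbors in `G`. -/
def E2 {W : Type} (G : SimpleGraph W) (x : W) : Prop :=
  ∃ a b, a ≠ b ∧ ∀ c, G.Adj x c ↔ (c = a ∨ c = b)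

lemma E2.map {W W' : Type} {G : SimpleGraph W} {G' : SimpleGraph W'} (φ : G ≃g G') {x : W}
    (h : E2 G x) : E2 G' (φ x) := by
  obtain ⟨a, b, hab, h⟩ := h
  refine ⟨φ a, φ b, fun he => hab (φ.injective he), fun c => ?_⟩
  rw [show c = φ (φ.symm c) by simp]
  rw [φ.map_adj_iff, h, EquivLike.apply_eq_iff_eq φ, EquivLike.apply_eq_iff_eq φ]

/-- every Q vertex of `C_X` has exactly two neighbors -/
lemma e2_q (q : QV X) : E2 (CX X) (Sum.inr (Sum.inl q)) := by
  refine ⟨Sum.inl q.1.1, Sum.inr (Sum.inr q.1.2), ne_lr, fun c => ?_⟩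
  rw [adj_q_iff]

/-- every R vertex of `C_X` has exactly two neighbors -/
lemma e2_r (e : X.edgeSet) : E2 (CX X) (Sum.inr (Sum.inr e)) := by
  classical
  obtain ⟨u, w, huw⟩ : ∃ u w, (e : Sym2 V) = s(u, w) :=
    (e : Sym2 V).inductionOn (fun x y => ⟨x, y, rfl⟩)
  have hadj : X.Adj u w := by rw [← SimpleGraph.mem_edgeSet, ← huw]; exact e.2
  have hu : u ∈ (e : Sym2 V) := by rw [huw]; exact Sym2.mem_mk_left u w
  have hw : w ∈ (e : Sym2 V) := by rw [huw]; exact Sym2.mem_mk_right u w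
  refine ⟨Sum.inr (Sum.inl ⟨(u, e), hu⟩), Sum.inr (Sum.inl ⟨(w, e), hw⟩), ?_, fun c => ?_⟩
  · intro h
    exact hadj.ne (congrArg (fun p => p.1.1) (inj_qq h) : u = w)
  · rw [adj_r_iff]
    constructor
    · rintro ⟨q, hq, rfl⟩
      have : q.1.1 ∈ (e : Sym2 V) := hq ▸ q.2
      rw [huw, Sym2.mem_iff] at this
      rcases this with h1 | h1
      · left
        congr 1
        congr 1
        exact Subtype.ext (Prod.ext h1 hq)
      · right
        congr 1
        congr 1
        exact Subtype.ext (Prod.ext h1 hq)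
    · rintro (rfl | rfl)
      · exact ⟨_, rfl, rfl⟩
      · exact ⟨_, rfl, rfl⟩

/-- the "other endpoint" of the edge of a Q-vertex -/
noncomputable def qOther (q : QV X) : V := Sym2.Mem.other q.2

lemma qOther_spec (q : QV X) : s(q.1.1, qOther q) = (q.1.2 : Sym2 V) :=
  Sym2.other_spec q.2

lemma adj_qOther (q : QV X) : X.Adj q.1.1 (qOther q) := by
  rw [← SimpleGraph.mem_edgeSet, qOther_spec]; exact q.1.2.2

/-- if `inl v` has exactly two neighbors in `C_X` then `v` has exactly two in `X`. -/
lemma e2_of_e2_inl {v : V} (h : E2 (CX X) (Sum.inl v)) : E2 X v := by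
  classical
  obtain ⟨a, b, hab, h⟩ := h
  obtain ⟨qa, hqa, rfl⟩ := adj_inl_iff.mp ((h a).mpr (Or.inl rfl))
  obtain ⟨qb, hqb, rfl⟩ := adj_inl_iff.mp ((h b).mpr (Or.inr rfl))
  refine ⟨qOther qa, qOther qb, ?_, fun c => ?_⟩
  · intro hcontra
    apply hab
    have : (qa.1.2 : Sym2 V) = qb.1.2 := by
      rw [← qOther_spec qa, ← qOther_spec qb, hqa, hqb, hcontra]
    congr 2
    exact Subtype.ext (Prod.ext (hqa.trans hqb.symm) (Subtype.ext this))
  · constructor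
    · intro hadj
      have he : s(v, c) ∈ X.edgeSet := X.mem_edgeSet.mpr hadj
      have hv : v ∈ (⟨s(v, c), he⟩ : X.edgeSet).1 := Sym2.mem_mk_left v c
      have := (h (Sum.inr (Sum.inl ⟨(v, ⟨s(v, c), he⟩), hv⟩))).mp (adj_lq.mpr rfl)
      rcases this with h1 | h1
      · left
        have h2 := inj_qq h1
        have h3 : s(v, c) = s(qa.1.1, qOther qa) := by
          rw [qOther_spec qa, ← h2]
        rw [hqa] at h3
        exact Sym2.congr_right.mp h3
      · right
        have h2 := inj_qq h1
        have h3 : s(v, c) = s(qb.1.1, qOther qb) := by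
          rw [qOther_spec qb, ← h2]
        rw [hqb] at h3
        exact Sym2.congr_right.mp h3
    · rintro (rfl | rfl)
      · exact hqa ▸ adj_qOther qa
      · exact hqb ▸ adj_qOther qb

end CXProof

namespace CXProof

open Function in
lemma cycle_classification {V : Type} [Fintype V] (X : SimpleGraph V) (hconn : X.Connected)
    (h2 : ∀ v, E2 X v) : ∃ n, Nonempty (X ≃g SimpleGraph.cycleGraph n) := by
  classical
  obtain ⟨v0⟩ := hconn.nonempty
  have H : ∀ u v, X.Adj u v → ∃ w, (X.Adj v w ∧ w ≠ u) ∧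
      ∀ w', X.Adj v w' → w' ≠ u → w' = w := by
    intro u v huv
    obtain ⟨a, b, hab, h⟩ := h2 v
    rcases (h u).mp huv.symm with rfl | rfl
    · exact ⟨b, ⟨(h b).mpr (Or.inr rfl), fun hb => hab hb.symm⟩,
        fun w' hw' hne => ((h w').mp hw').resolve_left hne⟩
    · exact ⟨a, ⟨(h a).mpr (Or.inl rfl), hab⟩,
        fun w' hw' hne => ((h w').mp hw').resolve_right hne⟩
  obtain ⟨nxt, hnxt⟩ : ∃ nxt : V → V → V, ∀ u v, X.Adj u v →
      (X.Adj v (nxt u v) ∧ nxt u v ≠ u) ∧ ∀ w', X.Adj v w' → w' ≠ u → w' = nxt u v := by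
    choose f hf using H
    refine ⟨fun u v => if h : X.Adj u v then f u v h else v0, fun u v h => ?_⟩
    simp only [dif_pos h]
    exact hf u v h
  have hF2 : ∀ u v, X.Adj u v → nxt (nxt u v) v = u := by
    intro u v h
    obtain ⟨⟨h1, h2'⟩, -⟩ := hnxt u v h
    obtain ⟨-, huniq⟩ := hnxt (nxt u v) v h1.symm
    exact (huniq u h.symm (fun hu => h2' hu.symm)).symm
  obtain ⟨a0, b0', hab0, h0⟩ := h2 v0
  have hx0adj : X.Adj v0 a0 := (h0 a0).mpr (Or.inl rfl)
  let D := {p : V × V // X.Adj p.1 p.2}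
  let x0 : D := ⟨(v0, a0), hx0adj⟩
  let σ : Equiv.Perm D :=
    { toFun := fun p => ⟨(p.1.2, nxt p.1.1 p.1.2), (hnxt _ _ p.2).1.1⟩
      invFun := fun p => ⟨(nxt p.1.2 p.1.1, p.1.1), ((hnxt _ _ p.2.symm).1.1).symm⟩
      left_inv := by
        rintro ⟨⟨u, v⟩, h⟩
        exact Subtype.ext (Prod.ext (hF2 u v h) rfl)
      right_inv := by
        rintro ⟨⟨u, v⟩, h⟩
        exact Subtype.ext (Prod.ext rfl (hF2 v u h.symm)) }
  set d : ℕ → D := fun k => σ^[k] x0 with hd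
  set c : ℕ → V := fun k => (d k).1.1 with hc
  have hd_succ : ∀ k, d (k+1) = σ (d k) := fun k => Function.iterate_succ_apply' σ k x0
  have hc1 : ∀ k, (d k).1.2 = c (k+1) := by
    intro k
    show (d k).1.2 = (d (k+1)).1.1
    rw [hd_succ k]
    rfl
  have hadjc : ∀ k, X.Adj (c k) (c (k+1)) := fun k => hc1 k ▸ (d k).2
  have hnxtc : ∀ k, c (k+2) = nxt (c k) (c (k+1)) := by
    intro k
    show (d (k+2)).1.1 = _
    rw [show k+2 = (k+1)+1 from rfl, hd_succ (k+1), hd_succ k]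
    show nxt (d k).1.1 (d k).1.2 = _
    rw [hc1 k]
  have hback : ∀ k, c (k+2) ≠ c k := by
    intro k
    rw [hnxtc k]
    exact (hnxt _ _ (hadjc k)).1.2
  set m := Function.minimalPeriod σ x0 with hm
  have hmpos : 0 < m := by
    apply Function.IsPeriodicPt.minimalPeriod_pos (orderOf_pos σ)
    show σ^[orderOf σ] x0 = x0
    rw [Equiv.Perm.iterate_eq_pow, pow_orderOf_eq_one]
    rfl
  have hdper : ∀ k, d (k + m) = d k := by
    intro k
    show σ^[k + m] x0 = σ^[k] x0
    rw [Function.iterate_add_apply]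
    congr 1
    exact Function.iterate_minimalPeriod
  have hdmul : ∀ j k, d (k + j * m) = d k := by
    intro j
    induction j with
    | zero => simp
    | succ j ih =>
      intro k
      have e : k + (j+1) * m = (k + j * m) + m := by ring
      rw [e, hdper, ih]
  have hdmod : ∀ k, d (k % m) = d k := by
    intro k
    conv_rhs => rw [← Nat.mod_add_div k m]
    rw [show k % m + m * (k / m) = k % m + (k / m) * m by ring, hdmul]
  have hm1 : m ≠ 1 := by
    intro h1
    have : d 1 = d 0 := by rw [show (1:ℕ) = 0 + m by omega, hdper]
    exact (hadjc 0).ne (congrArg (fun p => p.1.1) this).symm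
  have hm2 : m ≠ 2 := by
    intro h2'
    have : d 2 = d 0 := by rw [show (2:ℕ) = 0 + m by omega, hdper]
    exact hback 0 (congrArg (fun p => p.1.1) this)
  have hinjOn : Set.InjOn (fun n => σ^[n] x0) (Set.Iio m) :=
    Function.iterate_injOn_Iio_minimalPeriod
  have hdInj : ∀ a b : ℕ, a < m → b < m → d a = d b → a = b := by
    intro a b ha hb hab
    exact hinjOn ha hb hab
  obtain ⟨k0, hk0⟩ : ∃ k0, m = k0 + 1 + 2 := ⟨m - 3, by omega⟩
  rw [hk0] at hdper hdmod hdInj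
  haveI : NeZero (k0 + 1 + 2) := ⟨by omega⟩
  set M := k0 + 1 + 2 with hM

  set C : ZMod M → V := fun i => c i.val with hC
  have hCast : ∀ k : ℕ, C (k : ZMod M) = c k := by
    intro k
    show c ((k : ZMod M)).val = c k
    rw [ZMod.val_natCast]
    exact congrArg (fun p => p.1.1) (hdmod k)
  have hvi : ∀ i : ZMod M, ((i.val : ℕ) : ZMod M) = i := fun i => ZMod.natCast_rightInverse i
  have hCshift : ∀ (i : ZMod M) (t : ℕ), C (i + (t : ZMod M)) = c (i.val + t) := by
    intro i t
    rw [← hCast (i.val + t)]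
    congr 1
    push_cast [hvi]
    ring
  have hCadj : ∀ i : ZMod M, X.Adj (C i) (C (i+1)) := by
    intro i
    have h2' : C (i+1) = c (i.val + 1) := by
      have := hCshift i 1
      simpa using this
    rw [h2']
    exact hadjc i.val
  have hnbrC : ∀ (i : ZMod M) (w : V), X.Adj (C i) w → w = C (i+1) ∨ w = C (i-1) := by
    intro i w hw
    set j := (i-1).val with hj
    have hji : ((j : ℕ) : ZMod M) = i - 1 := hvi _
    have e1 : C i = c (j+1) := by
      rw [← hCast (j+1)]
      congr 1
      push_cast [hji]
      ring
    have e2 : C (i-1) = c j := by rw [← hji, hCast]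
    have e3 : C (i+1) = c (j+2) := by
      rw [← hCast (j+2)]
      congr 1
      push_cast [hji]
      ring
    by_cases hwj : w = c j
    · right; rw [e2, hwj]
    · left
      rw [e3, hnxtc j]
      refine (hnxt (c j) (c (j+1)) (hadjc j)).2 w ?_ hwj
      rw [← e1]
      exact hw
  have hb2 : ∀ a : ZMod M, C (a + 2) ≠ C a := by
    intro a
    have : C (a + 2) = c (a.val + 2) := by
      have := hCshift a 2
      simpa using this
    rw [this]
    exact hback a.val
  have hCinj : Function.Injective C := by
    intro i j hij
    by_contra hne
    have hdinj : ∀ a b : ZMod M, d a.val = d b.val → a = b := by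
      intro a b hab
      have := hdInj a.val b.val (ZMod.val_lt a) (ZMod.val_lt b) hab
      rw [← hvi a, ← hvi b, this]
    have hCsucc : ∀ a : ZMod M, C (a+1) = c (a.val + 1) := by
      intro a
      have := hCshift a 1
      simpa using this
    have hpair : ∀ a b : ZMod M, C a = C b → C (a+1) = C (b+1) → a = b := by
      intro a b h1 h2'
      apply hdinj
      apply Subtype.ext
      apply Prod.ext
      · exact h1
      · rw [hc1, hc1]
        exact (hCsucc a).symm.trans (h2'.trans (hCsucc b))
    have hadjj : X.Adj (C i) (C (j+1)) := by
      have := hCadj j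
      rw [← hij] at this
      exact this
    rcases hnbrC i _ hadjj with hA | hB
    · exact hne (hpair i j hij hA.symm)
    · have key : ∀ t : ℕ, C (j + (t : ZMod M)) = C (i - (t : ZMod M)) ∧
          C (j + (t : ZMod M) + 1) = C (i - (t : ZMod M) - 1) := by
        intro t
        induction t with
        | zero => refine ⟨by simpa using hij.symm, by simpa using hB⟩
        | succ t ih =>
          obtain ⟨ih1, ih2⟩ := ih
          have hadj2 : X.Adj (C (i - (t : ZMod M) - 1)) (C (j + (t : ZMod M) + 2)) := by
            have h' := hCadj (j + (t : ZMod M) + 1)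
            rw [ih2] at h'
            convert h' using 2
            ring
          rcases hnbrC (i - (t : ZMod M) - 1) _ hadj2 with h1 | h1
          · exfalso
            apply hb2 (j + (t : ZMod M))
            have : C (j + (t : ZMod M) + 2) = C (i - (t : ZMod M)) := by
              rw [h1]
              congr 1
              ring
            rw [show j + (t : ZMod M) + 2 = (j + (t : ZMod M)) + 2 from rfl] at this
            rw [this, ← ih1]
          · constructor
            · have := ih2
              convert this using 2 <;> push_cast <;> ring
            · have := h1
              convert this using 2 <;> push_cast <;> ring
      set k := (i - j).val with hkdef
      have hk : ((k : ℕ) : ZMod M) = i - j := hvi _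
      have hk0 : k ≠ 0 := by
        intro h0'
        rw [h0'] at hk
        simp at hk
        exact hne (by rw [← sub_eq_zero, ← hk])
      rcases Nat.even_or_odd k with ⟨t, ht⟩ | ⟨t, ht⟩
      · have ht1 : 1 ≤ t := by omega
        obtain ⟨h1', -⟩ := key (t - 1)
        have hcast : ((t - 1 : ℕ) : ZMod M) = (t : ZMod M) - 1 := by
          push_cast [Nat.cast_sub ht1]
          ring
        rw [hcast] at h1'
        have hit : i - ((t : ZMod M) - 1) = (j + (t : ZMod M) - 1) + 2 := by
          have : i = j + (k : ZMod M) := by rw [hk]; ring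
          rw [this, show ((k:ℕ) : ZMod M) = (t : ZMod M) + (t : ZMod M) by rw [ht]; push_cast; ring]
          ring
        rw [hit] at h1'
        exact hb2 (j + (t : ZMod M) - 1) (by rw [← h1']; congr 1; ring)
      · obtain ⟨-, h2'⟩ := key t
        have hit : i - (t : ZMod M) - 1 = j + (t : ZMod M) := by
          have : i = j + (k : ZMod M) := by rw [hk]; ring
          rw [this, show ((k:ℕ) : ZMod M) = 2 * (t : ZMod M) + 1 by rw [ht]; push_cast; ring]
          ring
        rw [hit] at h2'
        exact (hCadj (j + (t : ZMod M))).ne h2'.symm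
  have hC0 : C 0 = v0 := by
    show c (0 : ZMod M).val = v0
    rw [ZMod.val_zero]
    rfl
  have hCsurj : Function.Surjective C := by
    have hw : ∀ (u w : V), X.Walk u w → (∃ i, C i = u) → ∃ i, C i = w := by
      intro u w p
      induction p with
      | nil => exact id
      | @cons u' v' w' h p ih =>
        rintro ⟨i, hi⟩
        rw [← hi] at h
        rcases hnbrC i _ h with h1 | h1
        · exact ih ⟨i + 1, h1.symm⟩
        · exact ih ⟨i - 1, h1.symm⟩
    intro w
    exact hw v0 w ((hconn.preconnected v0 w).some) ⟨0, hC0⟩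
  set E : ZMod M ≃ V := Equiv.ofBijective C ⟨hCinj, hCsurj⟩ with hE
  have hadjiff : ∀ a b : ZMod M, X.Adj (C a) (C b) ↔ (a - b = 1 ∨ b - a = 1) := by
    intro a b
    constructor
    · intro h
      rcases hnbrC a (C b) h with h1 | h1
      · right
        rw [hCinj h1]
        ring
      · left
        rw [hCinj h1]
        ring
    · rintro (h1 | h1)
      · have ha : a = b + 1 := by rw [← h1]; ring
        rw [ha]
        exact (hCadj b).symm
      · have hbb : b = a + 1 := by rw [← h1]; ring
        rw [hbb]
        exact hCadj a
  refine ⟨k0 + 1 + 2, ⟨⟨(show V ≃ Fin (k0 + 1 + 2) from E.symm), @fun u v => ?_⟩⟩⟩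
  rw [SimpleGraph.cycleGraph_adj]
  have hiff := hadjiff (E.symm u) (E.symm v)
  rw [show C (E.symm u) = u from E.apply_symm_apply u,
      show C (E.symm v) = v from E.apply_symm_apply v] at hiff
  exact hiff.symm

end CXProof

namespace CXProof

variable {V : Type} {X : SimpleGraph V}

/-- parity: 1 on Q vertices, 0 elsewhere -/
def fpar : CXVert X → ZMod 2
  | Sum.inl _ => 0
  | Sum.inr (Sum.inl _) => 1
  | Sum.inr (Sum.inr _) => 0

/-- second parity: 1 on R vertices, 0 elsewhere -/
def gpar : CXVert X → ZMod 2
  | Sum.inl _ => 0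
  | Sum.inr (Sum.inl _) => 0
  | Sum.inr (Sum.inr _) => 1

lemma fpar_adj {a b : CXVert X} (h : (CX X).Adj a b) : fpar b = fpar a + 1 := by
  rcases a with v | q | e <;> rcases b with w | q' | e' <;>
    simp_all [fpar] <;> first | rfl | decide

lemma fpar_walk {a b : CXVert X} (w : (CX X).Walk a b) : fpar b = fpar a + w.length := by
  induction w with
  | nil => simp
  | cons h p ih =>
    rw [SimpleGraph.Walk.length_cons, ih, fpar_adj h]
    push_cast
    ring

/-- the common-neighbor graph -/
def G2 {W : Type} (G : SimpleGraph W) : SimpleGraph W where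
  Adj x y := x ≠ y ∧ ∃ z, G.Adj x z ∧ G.Adj z y
  symm := ⟨by rintro x y ⟨h, z, h1, h2⟩; exact ⟨h.symm, z, h2.symm, h1.symm⟩⟩
  loopless := ⟨fun x h => h.1 rfl⟩

def g2Hom {W W' : Type} {G : SimpleGraph W} {G' : SimpleGraph W'} (φ : G ≃g G') :
    G2 G →g G2 G' where
  toFun := φ
  map_rel' := by
    rintro x y ⟨hne, z, h1, h2⟩
    exact ⟨fun h => hne (φ.injective h), φ z, φ.map_adj_iff.mpr h1, φ.map_adj_iff.mpr h2⟩

lemma g2_lr {v : V} {e : X.edgeSet} :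
    (G2 (CX X)).Adj (Sum.inl v) (Sum.inr (Sum.inr e)) ↔ v ∈ (e : Sym2 V) := by
  constructor
  · rintro ⟨hne, z, h1, h2⟩
    obtain ⟨q, hq, rfl⟩ := adj_inl_iff.mp h1
    have he : q.1.2 = e := adj_qr.mp h2
    have := q.2
    rw [hq, he] at this
    exact this
  · intro hv
    exact ⟨ne_lr, Sum.inr (Sum.inl ⟨(v, e), hv⟩), adj_lq.mpr rfl, adj_qr.mpr rfl⟩

lemma g2_ll {v w : V} : ¬ (G2 (CX X)).Adj (Sum.inl v) (Sum.inl w) := by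
  rintro ⟨hne, z, h1, h2⟩
  obtain ⟨q, hq, rfl⟩ := adj_inl_iff.mp h1
  exact hne (by rw [← hq, adj_ql.mp h2])

lemma g2_lq {v : V} {q : QV X} : ¬ (G2 (CX X)).Adj (Sum.inl v) (Sum.inr (Sum.inl q)) := by
  rintro ⟨hne, z, h1, h2⟩
  obtain ⟨q', hq', rfl⟩ := adj_inl_iff.mp h1
  exact adj_qq h2
lemma g2_rq {e : X.edgeSet} {q : QV X} :
    ¬ (G2 (CX X)).Adj (Sum.inr (Sum.inr e)) (Sum.inr (Sum.inl q)) := by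
  rintro ⟨hne, z, h1, h2⟩
  obtain ⟨q', hq', rfl⟩ := adj_r_iff.mp h1
  exact adj_qq h2
lemma g2_rr {e e' : X.edgeSet} :
    ¬ (G2 (CX X)).Adj (Sum.inr (Sum.inr e)) (Sum.inr (Sum.inr e')) := by
  rintro ⟨hne, z, h1, h2⟩
  obtain ⟨q', hq', rfl⟩ := adj_r_iff.mp h1
  have := adj_qr.mp h2
  exact hne (by rw [← hq', this])

lemma g2_step {a b : CXVert X} (h : (G2 (CX X)).Adj a b) (ha : fpar a = 0) :
    fpar b = 0 ∧ gpar b = gpar a + 1 := by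
  rcases a with v | q | e <;> rcases b with w | q' | e'
  · exact absurd h g2_ll
  · exact absurd h g2_lq
  · exact ⟨rfl, by simp [gpar]⟩
  · exact absurd ha (by simp [fpar])
  · exact absurd ha (by simp [fpar])
  · exact absurd ha (by simp [fpar])
  · exact ⟨rfl, by show (0 : ZMod 2) = 1 + 1; decide⟩
  · exact absurd h g2_rq
  · exact absurd h g2_rr

lemma g2_walk {a b : CXVert X} (w : (G2 (CX X)).Walk a b) (ha : fpar a = 0) :
    fpar b = 0 ∧ gpar b = gpar a + w.length := by
  induction w with
  | nil => exact ⟨ha, by simp⟩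
  | cons h p ih =>
    obtain ⟨h1, h2⟩ := g2_step h ha
    obtain ⟨h3, h4⟩ := ih h1
    refine ⟨h3, ?_⟩
    rw [SimpleGraph.Walk.length_cons, h4, h2]
    push_cast
    ring

/-- reachability of `inl` vertices in `C_X` -/
lemma cx_reach_inl {u v : V} (h : X.Reachable u v) :
    (CX X).Reachable (Sum.inl u) (Sum.inl v) := by
  obtain ⟨p⟩ := h
  induction p with
  | nil => exact SimpleGraph.Reachable.refl _
  | @cons u' v' w' h p ih =>
    refine SimpleGraph.Reachable.trans ?_ ih
    have he : s(u', v') ∈ X.edgeSet := X.mem_edgeSet.mpr h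
    have hu : u' ∈ (⟨s(u', v'), he⟩ : X.edgeSet).1 := Sym2.mem_mk_left _ _
    have hv : v' ∈ (⟨s(u', v'), he⟩ : X.edgeSet).1 := Sym2.mem_mk_right _ _
    have r1 : (CX X).Adj (Sum.inl u') (Sum.inr (Sum.inl ⟨(u', ⟨s(u', v'), he⟩), hu⟩)) :=
      adj_lq.mpr rfl
    have r2 : (CX X).Adj (Sum.inr (Sum.inl ⟨(u', ⟨s(u', v'), he⟩), hu⟩))
        (Sum.inr (Sum.inr ⟨s(u', v'), he⟩)) := adj_qr.mpr rfl
    have r3 : (CX X).Adj (Sum.inr (Sum.inr ⟨s(u', v'), he⟩))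
        (Sum.inr (Sum.inl ⟨(v', ⟨s(u', v'), he⟩), hv⟩)) := adj_rq.mpr rfl
    have r4 : (CX X).Adj (Sum.inr (Sum.inl ⟨(v', ⟨s(u', v'), he⟩), hv⟩)) (Sum.inl v') :=
      adj_ql.mpr rfl
    exact ((((r1.reachable).trans r2.reachable).trans r3.reachable).trans r4.reachable)

lemma cx_reach_all (hconn : X.Connected) (b : V) (x : CXVert X) :
    (CX X).Reachable (Sum.inl b) x := by
  rcases x with v | q | e
  · exact cx_reach_inl (hconn b v)
  · exact (cx_reach_inl (hconn b q.1.1)).trans (adj_lq.mpr rfl).reachable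
  · obtain ⟨u, w, huw⟩ : ∃ u w, (e : Sym2 V) = s(u, w) :=
      (e : Sym2 V).inductionOn (fun x y => ⟨x, y, rfl⟩)
    have hu : u ∈ (e : Sym2 V) := by rw [huw]; exact Sym2.mem_mk_left _ _
    refine (cx_reach_inl (hconn b u)).trans ?_
    exact ((adj_lq (q := ⟨(u, e), hu⟩)).mpr rfl).reachable.trans (adj_qr.mpr rfl).reachable

/-- reachability of `inl` vertices in `G2 (C_X)` -/
lemma g2_reach_inl {u v : V} (h : X.Reachable u v) :
    (G2 (CX X)).Reachable (Sum.inl u) (Sum.inl v) := by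
  obtain ⟨p⟩ := h
  induction p with
  | nil => exact SimpleGraph.Reachable.refl _
  | @cons u' v' w' h p ih =>
    refine SimpleGraph.Reachable.trans ?_ ih
    have he : s(u', v') ∈ X.edgeSet := X.mem_edgeSet.mpr h
    have r1 : (G2 (CX X)).Adj (Sum.inl u') (Sum.inr (Sum.inr ⟨s(u', v'), he⟩)) :=
      g2_lr.mpr (Sym2.mem_mk_left _ _)
    have r2 : (G2 (CX X)).Adj (Sum.inr (Sum.inr ⟨s(u', v'), he⟩)) (Sum.inl v') :=
      ((g2_lr.mpr (Sym2.mem_mk_right _ _)).symm)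
    exact (r1.reachable).trans r2.reachable

/-- main class-preservation: automorphisms of `C_X` send `P` into `P` -/
lemma inl_preserved (hconn : X.Connected) (b0 : V) (hb0 : ¬ E2 X b0)
    (φ : CX X ≃g CX X) : ∀ v : V, ∃ w : V, φ (Sum.inl v) = Sum.inl w := by
  have hb0' : ¬ E2 (CX X) (Sum.inl b0) := fun h => hb0 (e2_of_e2_inl h)
  have hne2 : ¬ E2 (CX X) (φ (Sum.inl b0)) := by
    intro h
    apply hb0'
    have := E2.map φ.symm h
    exact (φ.symm_apply_apply (Sum.inl b0 : CXVert X)) ▸ this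
  obtain ⟨b1, hb1⟩ : ∃ b1, φ (Sum.inl b0) = Sum.inl b1 := by
    rcases hx : φ (Sum.inl b0) with w | q | e
    · exact ⟨w, rfl⟩
    · exact absurd (hx ▸ e2_q q) hne2
    · exact absurd (hx ▸ e2_r e) hne2
  intro v
  -- fpar invariance
  obtain ⟨p⟩ := cx_reach_all hconn b0 (Sum.inl v)
  have hfv : fpar (φ (Sum.inl v)) = 0 := by
    have h1 := fpar_walk p
    have h1' : (p.length : ZMod 2) = 0 := by simpa [fpar] using h1.symm
    have h2 : fpar (φ (Sum.inl v)) = fpar (φ (Sum.inl b0)) + ↑(p.map φ.toHom).length :=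
      fpar_walk (p.map φ.toHom)
    have h3 := SimpleGraph.Walk.length_map (f := φ.toHom) (p := p)
    have h4 : fpar (φ (Sum.inl b0)) = 0 := (congrArg fpar hb1).trans rfl
    exact h2.trans ((congrArg₂ (· + ·) h4
      ((congrArg (fun n : ℕ => (n : ZMod 2)) h3).trans h1')).trans (add_zero 0))
  -- gpar invariance
  obtain ⟨p2⟩ := g2_reach_inl (hconn b0 v)
  have hgv : gpar (φ (Sum.inl v)) = 0 := by
    have h1 : (p2.length : ZMod 2) = 0 := by
      simpa [gpar] using ((g2_walk p2 rfl).2).symm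
    have h4 := (g2_walk ((p2.map (g2Hom φ)).copy
      (show (g2Hom φ) (Sum.inl b0) = Sum.inl b1 from hb1) rfl) rfl).2
    have h5 := (congrArg (fun n : ℕ => (n : ZMod 2))
      ((SimpleGraph.Walk.length_copy _
        (show (g2Hom φ) (Sum.inl b0) = Sum.inl b1 from hb1) rfl).trans
        (SimpleGraph.Walk.length_map (f := g2Hom φ) (p := p2)))).trans h1
    exact h4.trans ((congrArg₂ (· + ·) (rfl : gpar (Sum.inl b1 : CXVert X) = 0) h5).trans
      (add_zero 0))
  rcases hx : φ (Sum.inl v) with w | q | e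
  · exact ⟨w, rfl⟩
  · rw [hx] at hfv; exact absurd hfv (by simp [fpar])
  · rw [hx] at hgv; exact absurd hgv (by simp [gpar])

end CXProof

namespace CXProof

variable {V : Type} {X : SimpleGraph V}

lemma sym2_eq {z : Sym2 V} {x y : V} (hx : x ∈ z) (hy : y ∈ z) (hne : x ≠ y) :
    z = s(x, y) := by
  obtain ⟨a, b, rfl⟩ : ∃ a b, z = s(a, b) := z.inductionOn (fun a b => ⟨a, b, rfl⟩)
  rw [Sym2.mem_iff] at hx hy
  rcases hx with rfl | rfl <;> rcases hy with rfl | rfl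
  · exact absurd rfl hne
  · rfl
  · exact Sym2.eq_swap
  · exact absurd rfl hne

def qEquiv (α : X ≃g X) : QV X ≃ QV X :=
  Equiv.subtypeEquiv (Equiv.prodCongr α.toEquiv α.mapEdgeSet) (by
    intro p
    constructor
    · intro hp
      show α p.1 ∈ (α.mapEdgeSet p.2 : Sym2 V)
      exact Sym2.mem_map.mpr ⟨p.1, hp, rfl⟩
    · intro hp
      have hp' : α p.1 ∈ Sym2.map α (p.2 : Sym2 V) := hp
      obtain ⟨a, ha, haeq⟩ := Sym2.mem_map.mp hp'
      rwa [← α.injective haeq])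

def lift (α : X ≃g X) : CX X ≃g CX X where
  toEquiv := Equiv.sumCongr α.toEquiv (Equiv.sumCongr (qEquiv α) α.mapEdgeSet)
  map_rel_iff' := by
    rintro (v | q | e) (w | q' | e')
    · show (CX X).Adj (Sum.inl (α v)) (Sum.inl (α w)) ↔ _
      simp only [adj_ll]
    · show (CX X).Adj (Sum.inl (α v)) (Sum.inr (Sum.inl (qEquiv α q'))) ↔ _
      rw [adj_lq, adj_lq]
      exact EquivLike.apply_eq_iff_eq α
    · show (CX X).Adj (Sum.inl (α v)) (Sum.inr (Sum.inr (α.mapEdgeSet e'))) ↔ _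
      simp only [adj_lr]
    · show (CX X).Adj (Sum.inr (Sum.inl (qEquiv α q))) (Sum.inl (α w)) ↔ _
      rw [adj_ql, adj_ql]
      exact EquivLike.apply_eq_iff_eq α
    · show (CX X).Adj (Sum.inr (Sum.inl (qEquiv α q))) (Sum.inr (Sum.inl (qEquiv α q'))) ↔ _
      simp only [adj_qq]
    · show (CX X).Adj (Sum.inr (Sum.inl (qEquiv α q))) (Sum.inr (Sum.inr (α.mapEdgeSet e'))) ↔ _
      rw [adj_qr, adj_qr]
      exact EquivLike.apply_eq_iff_eq α.mapEdgeSet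
    · show (CX X).Adj (Sum.inr (Sum.inr (α.mapEdgeSet e))) (Sum.inl (α w)) ↔ _
      simp only [adj_rl]
    · show (CX X).Adj (Sum.inr (Sum.inr (α.mapEdgeSet e))) (Sum.inr (Sum.inl (qEquiv α q'))) ↔ _
      rw [adj_rq, adj_rq]
      exact EquivLike.apply_eq_iff_eq α.mapEdgeSet
    · show (CX X).Adj (Sum.inr (Sum.inr (α.mapEdgeSet e))) (Sum.inr (Sum.inr (α.mapEdgeSet e'))) ↔ _
      simp only [adj_rr]

lemma lift_inl (α : X ≃g X) (v : V) : lift α (Sum.inl v) = Sum.inl (α v) := rfl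

end CXProof

/-- If `X` is a connected finite graph, not isomorphic to any cycle `C_n`, then
`Aut(C_X) ≅ Aut(X)`. -/
theorem aut_CX_iso_aut {V : Type} [Fintype V] (X : SimpleGraph V)
    (hconn : X.Connected)
    (hnotcycle : ∀ n : ℕ, IsEmpty (X ≃g SimpleGraph.cycleGraph n)) :
    Nonempty ((CX X ≃g CX X) ≃* (X ≃g X)) := by
  classical
  -- a branch vertex exists
  obtain ⟨b0, hb0⟩ : ∃ b0, ¬ CXProof.E2 X b0 := by
    by_contra h
    push_neg at h
    obtain ⟨n, ⟨iso⟩⟩ := CXProof.cycle_classification X hconn h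
    exact (hnotcycle n).false iso
  -- the projection to V
  choose pf hpf using fun (φ : CX X ≃g CX X) => CXProof.inl_preserved hconn b0 hb0 φ
  have hcomp : ∀ (φ₁ φ₂ : CX X ≃g CX X) (v : V), pf (φ₁ * φ₂) v = pf φ₁ (pf φ₂ v) := by
    intro φ₁ φ₂ v
    apply CXProof.inj_ll (X := X)
    rw [← hpf (φ₁ * φ₂) v, ← hpf φ₁ (pf φ₂ v), ← hpf φ₂ v]
    rfl
  have hone : ∀ v, pf 1 v = v := by
    intro v
    apply CXProof.inj_ll (X := X)
    rw [← hpf 1 v]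
    rfl
  have hli : ∀ (φ : CX X ≃g CX X) (v : V), pf φ⁻¹ (pf φ v) = v := by
    intro φ v
    rw [← hcomp, inv_mul_cancel, hone]
  have hri : ∀ (φ : CX X ≃g CX X) (v : V), pf φ (pf φ⁻¹ v) = v := by
    intro φ v
    rw [← hcomp, mul_inv_cancel, hone]
  -- adjacency is preserved
  have hadj : ∀ (φ : CX X ≃g CX X) (u v : V), X.Adj u v → X.Adj (pf φ u) (pf φ v) := by
    intro φ u v huv
    have he' : s(u, v) ∈ X.edgeSet := X.mem_edgeSet.mpr huv
    set e : X.edgeSet := ⟨s(u, v), he'⟩ with he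
    have hu : u ∈ (e : Sym2 V) := Sym2.mem_mk_left _ _
    have hv : v ∈ (e : Sym2 V) := Sym2.mem_mk_right _ _
    have h1 : (CX X).Adj (Sum.inl (pf φ u)) (φ (Sum.inr (Sum.inl ⟨(u, e), hu⟩))) := by
      have := φ.map_adj_iff.mpr
        (CXProof.adj_lq.mpr rfl : (CX X).Adj (Sum.inl u) (Sum.inr (Sum.inl ⟨(u, e), hu⟩)))
      rwa [hpf φ u] at this
    obtain ⟨qu', hqu'1, hqu'2⟩ := CXProof.adj_inl_iff.mp h1
    have h2 : (CX X).Adj (φ (Sum.inr (Sum.inl ⟨(u, e), hu⟩))) (φ (Sum.inr (Sum.inr e))) :=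
      φ.map_adj_iff.mpr (CXProof.adj_qr.mpr rfl)
    rw [hqu'2] at h2
    rcases CXProof.adj_q_iff.mp h2 with h3 | h3
    · exfalso
      rw [hqu'1, ← hpf φ u] at h3
      exact CXProof.ne_lr (φ.injective h3).symm
    · have h4 : (CX X).Adj (Sum.inl (pf φ v)) (φ (Sum.inr (Sum.inl ⟨(v, e), hv⟩))) := by
        have := φ.map_adj_iff.mpr
          (CXProof.adj_lq.mpr rfl : (CX X).Adj (Sum.inl v) (Sum.inr (Sum.inl ⟨(v, e), hv⟩)))
        rwa [hpf φ v] at this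
      obtain ⟨qv', hqv'1, hqv'2⟩ := CXProof.adj_inl_iff.mp h4
      have h5 : (CX X).Adj (φ (Sum.inr (Sum.inl ⟨(v, e), hv⟩))) (φ (Sum.inr (Sum.inr e))) :=
        φ.map_adj_iff.mpr (CXProof.adj_qr.mpr rfl)
      rw [hqv'2, h3] at h5
      have h6 : qv'.1.2 = qu'.1.2 := CXProof.adj_qr.mp h5
      have hm1 : pf φ u ∈ (qu'.1.2 : Sym2 V) := hqu'1 ▸ qu'.2
      have hm2 : pf φ v ∈ (qu'.1.2 : Sym2 V) := by rw [← h6]; exact hqv'1 ▸ qv'.2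
      have hne : pf φ u ≠ pf φ v := by
        intro hh
        have h7 : (Sum.inl u : CXVert X) = Sum.inl v :=
          φ.injective (by rw [hpf φ u, hpf φ v, hh])
        exact huv.ne (CXProof.inj_ll h7)
      obtain ⟨x, y, hxy⟩ : ∃ x y, (qu'.1.2 : Sym2 V) = s(x, y) :=
        (qu'.1.2 : Sym2 V).inductionOn (fun x y => ⟨x, y, rfl⟩)
      have hadjxy : X.Adj x y := by
        rw [← SimpleGraph.mem_edgeSet, ← hxy]
        exact qu'.1.2.2
      rw [hxy, Sym2.mem_iff] at hm1 hm2
      rcases hm1 with h7 | h7 <;> rcases hm2 with h8 | h8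
      · exact absurd (h7.trans h8.symm) hne
      · rw [h7, h8]; exact hadjxy
      · rw [h7, h8]; exact hadjxy.symm
      · exact absurd (h7.trans h8.symm) hne
  -- the group hom
  let Θ : (CX X ≃g CX X) →* (X ≃g X) := MonoidHom.mk' (fun φ =>
    { toFun := pf φ
      invFun := pf φ⁻¹
      left_inv := hli φ
      right_inv := hri φ
      map_rel_iff' := by
        intro a b
        constructor
        · intro h
          have h' : X.Adj (pf φ a) (pf φ b) := h
          have h'' := hadj φ⁻¹ _ _ h'
          rwa [hli φ a, hli φ b] at h''
        · exact hadj φ a b }) (by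
    intro φ₁ φ₂
    ext v
    exact hcomp φ₁ φ₂ v)
  have hΘapp : ∀ (φ : CX X ≃g CX X) (v : V), (Θ φ) v = pf φ v := fun _ _ => rfl
  -- injectivity
  have hinj : Function.Injective Θ := by
    rw [injective_iff_map_eq_one]
    intro φ hφ1
    have hfixpf : ∀ v, pf φ v = v := by
      intro v
      have h5 : (Θ φ) v = v := congrArg (fun (α : X ≃g X) => α v) hφ1
      rw [← hΘapp φ v]
      exact h5
    have hfixl : ∀ v, φ (Sum.inl v) = Sum.inl v := fun v => by rw [hpf φ v, hfixpf v]
    have hfixr : ∀ e : X.edgeSet, φ (Sum.inr (Sum.inr e)) = Sum.inr (Sum.inr e) := by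
      intro e
      obtain ⟨x, y, hxy⟩ : ∃ x y, (e : Sym2 V) = s(x, y) :=
        (e : Sym2 V).inductionOn (fun x y => ⟨x, y, rfl⟩)
      have hadjxy : X.Adj x y := by
        rw [← SimpleGraph.mem_edgeSet, ← hxy]
        exact e.2
      have hx : x ∈ (e : Sym2 V) := by rw [hxy]; exact Sym2.mem_mk_left _ _
      have hy : y ∈ (e : Sym2 V) := by rw [hxy]; exact Sym2.mem_mk_right _ _
      -- image of the q-vertex over x
      have h1 : (CX X).Adj (Sum.inl x) (φ (Sum.inr (Sum.inl ⟨(x, e), hx⟩))) := by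
        have := φ.map_adj_iff.mpr
          (CXProof.adj_lq.mpr rfl : (CX X).Adj (Sum.inl x) (Sum.inr (Sum.inl ⟨(x, e), hx⟩)))
        rwa [hfixl x] at this
      obtain ⟨qx', hqx'1, hqx'2⟩ := CXProof.adj_inl_iff.mp h1
      have h2 : (CX X).Adj (φ (Sum.inr (Sum.inl ⟨(x, e), hx⟩))) (φ (Sum.inr (Sum.inr e))) :=
        φ.map_adj_iff.mpr (CXProof.adj_qr.mpr rfl)
      rw [hqx'2] at h2
      rcases CXProof.adj_q_iff.mp h2 with h3 | h3
      · exfalso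
        rw [hqx'1, ← hfixl x] at h3
        exact CXProof.ne_lr (φ.injective h3).symm
      · -- same for y
        have h4 : (CX X).Adj (Sum.inl y) (φ (Sum.inr (Sum.inl ⟨(y, e), hy⟩))) := by
          have := φ.map_adj_iff.mpr
            (CXProof.adj_lq.mpr rfl : (CX X).Adj (Sum.inl y) (Sum.inr (Sum.inl ⟨(y, e), hy⟩)))
          rwa [hfixl y] at this
        obtain ⟨qy', hqy'1, hqy'2⟩ := CXProof.adj_inl_iff.mp h4
        have h5 : (CX X).Adj (φ (Sum.inr (Sum.inl ⟨(y, e), hy⟩))) (φ (Sum.inr (Sum.inr e))) :=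
          φ.map_adj_iff.mpr (CXProof.adj_qr.mpr rfl)
        rw [hqy'2, h3] at h5
        have h6 : qy'.1.2 = qx'.1.2 := CXProof.adj_qr.mp h5
        have hmx : x ∈ (qx'.1.2 : Sym2 V) := hqx'1 ▸ qx'.2
        have hmy : y ∈ (qx'.1.2 : Sym2 V) := by rw [← h6]; exact hqy'1 ▸ qy'.2
        have hee : (qx'.1.2 : Sym2 V) = (e : Sym2 V) := by
          rw [CXProof.sym2_eq hmx hmy hadjxy.ne, hxy]
        rw [h3]
        congr 2
        exact Subtype.ext hee
    have hfixq : ∀ q : CXProof.QV X, φ (Sum.inr (Sum.inl q)) = Sum.inr (Sum.inl q) := by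
      intro q
      have h1 : (CX X).Adj (Sum.inl q.1.1) (φ (Sum.inr (Sum.inl q))) := by
        have := φ.map_adj_iff.mpr
          (CXProof.adj_lq.mpr rfl : (CX X).Adj (Sum.inl q.1.1) (Sum.inr (Sum.inl q)))
        rwa [hfixl q.1.1] at this
      obtain ⟨q', hq'1, hq'2⟩ := CXProof.adj_inl_iff.mp h1
      have h2 : (CX X).Adj (φ (Sum.inr (Sum.inl q))) (φ (Sum.inr (Sum.inr q.1.2))) :=
        φ.map_adj_iff.mpr (CXProof.adj_qr.mpr rfl)
      rw [hq'2, hfixr q.1.2] at h2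
      have h3 : q'.1.2 = q.1.2 := CXProof.adj_qr.mp h2
      rw [hq'2]
      congr 2
      exact Subtype.ext (Prod.ext hq'1 h3)
    ext z
    show φ z = z
    rcases z with v | q | e
    · exact hfixl v
    · exact hfixq q
    · exact hfixr e
  -- surjectivity
  have hsurjΘ : Function.Surjective Θ := by
    intro α
    refine ⟨CXProof.lift α, ?_⟩
    ext v
    rw [hΘapp]
    show pf (CXProof.lift α) v = α v
    apply CXProof.inj_ll (X := X)
    rw [← hpf (CXProof.lift α) v]
    exact CXProof.lift_inl α v
  exact ⟨MulEquiv.ofBijective Θ ⟨hinj, hsurjΘ⟩⟩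
end

section
/- In the graph C_X obtained by subdividing each edge of a connected graph X (X not a cycle) into a path of length four, every automorphism of C_X preserves the partition of the vertex set into the original vertices P, the middle vertices R, and the intermediate vertices Q. -/
/-- The block `P` of original vertices in `C_X`. -/
def Pblock {V : Type} (X : SimpleGraph V) : Set (CXVert X) := Set.range Sum.inl

/-- The block `Q` of intermediate vertices in `C_X`. -/
def Qblock {V : Type} (X : SimpleGraph V) : Set (CXVert X) :=
  Set.range (Sum.inr ∘ Sum.inl)

/-- The block `R` of middle vertices in `C_X`. -/
def Rblock {V : Type} (X : SimpleGraph V) : Set (CXVert X) :=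
  Set.range (Sum.inr ∘ Sum.inr)

section Aux

open SimpleGraph Sum

variable {V : Type} {X : SimpleGraph V}

abbrev QV (X : SimpleGraph V) := {p : V × X.edgeSet // p.1 ∈ (p.2 : Sym2 V)}

lemma cx_adj_inl {v : V} {y : CXVert X} :
    (CX X).Adj (Sum.inl v) y ↔ ∃ q : QV X, y = inr (inl q) ∧ q.1.1 = v := by
  constructor
  · rintro ⟨hne, h | h⟩ <;> rcases y with v' | q' | r'
    · exact absurd h id
    · exact ⟨q', rfl, h.symm⟩
    · exact absurd h id
    · exact absurd h id
    · exact absurd h id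
    · exact absurd h id
  · rintro ⟨q, rfl, rfl⟩
    exact ⟨Sum.inl_ne_inr, Or.inl rfl⟩

lemma cx_adj_q {q : QV X} {y : CXVert X} :
    (CX X).Adj (inr (inl q)) y ↔ y = inl q.1.1 ∨ y = inr (inr q.1.2) := by
  constructor
  · rintro ⟨hne, h | h⟩ <;> rcases y with v' | q' | r'
    · exact absurd h id
    · exact absurd h id
    · exact Or.inr (by rw [h])
    · exact Or.inl (by rw [h])
    · exact absurd h id
    · exact absurd h id
  · rintro (rfl | rfl)
    · exact ⟨Sum.inr_ne_inl, Or.inr rfl⟩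
    · exact ⟨fun h => Sum.inl_ne_inr (Sum.inr_injective h), Or.inl rfl⟩

lemma cx_adj_r {r : X.edgeSet} {y : CXVert X} :
    (CX X).Adj (inr (inr r)) y ↔ ∃ q : QV X, y = inr (inl q) ∧ q.1.2 = r := by
  constructor
  · rintro ⟨hne, h | h⟩ <;> rcases y with v' | q' | r'
    · exact absurd h id
    · exact absurd h id
    · exact absurd h id
    · exact absurd h id
    · exact ⟨q', rfl, h⟩
    · exact absurd h id
  · rintro ⟨q, rfl, rfl⟩
    exact ⟨fun h => Sum.inr_ne_inl (Sum.inr_injective h), Or.inr rfl⟩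

lemma path_from_P {b : V} : ∀ (n : ℕ) (a : V)
    (w : (CX X).Walk (Sum.inl a) (Sum.inl b)), w.length = n → w.IsPath →
    w.length % 4 = 0 := by
  intro n
  induction n using Nat.strong_induction_on with
  | _ n IH =>
  intro a w hn hp
  cases w with
  | nil => rfl
  | cons h1 w1 =>
    obtain ⟨q, rfl, rfl⟩ := cx_adj_inl.mp h1
    cases w1 with
    | cons h2 w2 =>
      rcases cx_adj_q.mp h2 with h | h
      · -- returns to start: contradicts path
        exfalso
        erw [Walk.cons_isPath_iff] at hp
        apply hp.2
        rw [← h]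
        exact Walk.support_cons _ _ ▸ List.mem_cons_of_mem _ (Walk.start_mem_support w2)
      · subst h
        cases w2 with
        | cons h3 w3 =>
          obtain ⟨q', rfl, hq'⟩ := cx_adj_r.mp h3
          cases w3 with
          | cons h4 w4 =>
            rcases cx_adj_q.mp h4 with h | h
            · subst h
              -- apply IH to w4
              erw [Walk.cons_isPath_iff, Walk.cons_isPath_iff,
                Walk.cons_isPath_iff, Walk.cons_isPath_iff] at hp
              have hp4 : w4.IsPath := hp.1.1.1.1
              have hlen : w4.length = n - 4 := by
                subst hn; rfl
              have := IH (n - 4) (by erw [Walk.length_cons, Walk.length_cons, Walk.length_cons, Walk.length_cons] at hn; omega)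
                q'.1.1 w4 hlen hp4
              erw [Walk.length_cons, Walk.length_cons, Walk.length_cons, Walk.length_cons]
              erw [Walk.length_cons, Walk.length_cons, Walk.length_cons, Walk.length_cons] at hn
              omega
            · exfalso
              rw [hq'] at h
              subst h
              erw [Walk.cons_isPath_iff, Walk.cons_isPath_iff,
                Walk.cons_isPath_iff] at hp
              apply hp.1.1.2
              exact Walk.support_cons _ _ ▸ List.mem_cons_of_mem _ (Walk.start_mem_support w4)

lemma path_from_R {b : V} (r : X.edgeSet)
    (w : (CX X).Walk (inr (inr r)) (Sum.inl b)) (hp : w.IsPath) :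
    w.length % 4 = 2 := by
  cases w with
  | cons h1 w1 =>
    obtain ⟨q, rfl, hq⟩ := cx_adj_r.mp h1
    cases w1 with
    | cons h2 w2 =>
      rcases cx_adj_q.mp h2 with h | h
      · subst h
        erw [Walk.cons_isPath_iff, Walk.cons_isPath_iff] at hp
        have := path_from_P w2.length q.1.1 w2 rfl hp.1.1
        erw [Walk.length_cons, Walk.length_cons]
        omega
      · exfalso
        rw [hq] at h
        subst h
        erw [Walk.cons_isPath_iff, Walk.cons_isPath_iff] at hp
        apply hp.2
        exact Walk.support_cons _ _ ▸ List.mem_cons_of_mem _ (Walk.start_mem_support w2)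

lemma path_from_Q {b : V} (q : QV X)
    (w : (CX X).Walk (inr (inl q)) (Sum.inl b)) (hp : w.IsPath) :
    w.length % 2 = 1 := by
  cases w with
  | cons h1 w1 =>
    rcases cx_adj_q.mp h1 with h | h
    · subst h
      erw [Walk.cons_isPath_iff] at hp
      have := path_from_P w1.length q.1.1 w1 rfl hp.1
      erw [Walk.length_cons]
      omega
    · subst h
      erw [Walk.cons_isPath_iff] at hp
      have := path_from_R q.1.2 w1 hp.1
      erw [Walk.length_cons]
      omega

lemma cx_reachable_adj (a b : V) (hab : X.Adj a b) :
    (CX X).Reachable (Sum.inl a) (Sum.inl b) := by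
  set e : X.edgeSet := ⟨s(a, b), hab⟩ with he
  have ha : a ∈ (e : Sym2 V) := Sym2.mem_mk_left a b
  have hb : b ∈ (e : Sym2 V) := Sym2.mem_mk_right a b
  set q1 : QV X := ⟨(a, e), ha⟩
  set q2 : QV X := ⟨(b, e), hb⟩
  have h1 : (CX X).Adj (Sum.inl a) (inr (inl q1)) := cx_adj_inl.mpr ⟨q1, rfl, rfl⟩
  have h2 : (CX X).Adj (inr (inl q1)) (inr (inr e)) := cx_adj_q.mpr (Or.inr rfl)
  have h3 : (CX X).Adj (inr (inl q2)) (inr (inr e)) := cx_adj_q.mpr (Or.inr rfl)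
  have h4 : (CX X).Adj (inr (inl q2)) (Sum.inl b) := cx_adj_q.mpr (Or.inl rfl)
  exact (((h1.reachable.trans h2.reachable).trans h3.reachable.symm).trans h4.reachable)

lemma cx_reachable_P (a b : V) (h : X.Reachable a b) :
    (CX X).Reachable (Sum.inl a) (Sum.inl b) := by
  obtain ⟨w⟩ := h
  induction w with
  | nil => exact Reachable.refl _
  | cons h p ih => exact (cx_reachable_adj _ _ h).trans ih

lemma cx_to_P (hconn : X.Connected) (x : CXVert X) :
    ∃ a : V, (CX X).Reachable x (Sum.inl a) := by
  rcases x with v | q | r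
  · exact ⟨v, Reachable.refl _⟩
  · exact ⟨q.1.1, (cx_adj_q.mpr (Or.inl rfl)).reachable⟩
  · refine ⟨(r : Sym2 V).out.1, ?_⟩
    have hm : (r : Sym2 V).out.1 ∈ (r : Sym2 V) := Sym2.out_fst_mem _
    set q : QV X := ⟨((r : Sym2 V).out.1, r), hm⟩
    have h1 : (CX X).Adj (inr (inr r)) (inr (inl q)) := cx_adj_r.mpr ⟨q, rfl, rfl⟩
    have h2 : (CX X).Adj (inr (inl q)) (Sum.inl q.1.1) := cx_adj_q.mpr (Or.inl rfl)
    exact h1.reachable.trans h2.reachable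

lemma cx_connected (hconn : X.Connected) : (CX X).Connected := by
  have hne : Nonempty V := hconn.nonempty
  obtain ⟨v0⟩ := hne
  rw [SimpleGraph.connected_iff]
  refine ⟨fun x y => ?_, ⟨Sum.inl v0⟩⟩
  obtain ⟨a, hx⟩ := cx_to_P hconn x
  obtain ⟨b, hy⟩ := cx_to_P hconn y
  exact (hx.trans (cx_reachable_P a b (hconn.preconnected a b))).trans hy.symm

lemma dist_mod_P (hconn : X.Connected) (v0 a : V) :
    (CX X).dist (Sum.inl a) (Sum.inl v0) % 4 = 0 := by
  have hr : (CX X).Reachable (Sum.inl a) (Sum.inl v0) :=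
    (cx_connected hconn).preconnected _ _
  obtain ⟨p, hp, hlen⟩ := hr.exists_path_of_dist
  rw [← hlen]
  exact path_from_P p.length a p rfl hp

lemma dist_mod_R (hconn : X.Connected) (v0 : V) (r : X.edgeSet) :
    (CX X).dist (inr (inr r)) (Sum.inl v0) % 4 = 2 := by
  have hr : (CX X).Reachable (inr (inr r)) (Sum.inl v0) :=
    (cx_connected hconn).preconnected _ _
  obtain ⟨p, hp, hlen⟩ := hr.exists_path_of_dist
  rw [← hlen]
  exact path_from_R r p hp

lemma dist_mod_Q (hconn : X.Connected) (v0 : V) (q : QV X) :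
    (CX X).dist (inr (inl q)) (Sum.inl v0) % 2 = 1 := by
  have hr : (CX X).Reachable (inr (inl q)) (Sum.inl v0) :=
    (cx_connected hconn).preconnected _ _
  obtain ⟨p, hp, hlen⟩ := hr.exists_path_of_dist
  rw [← hlen]
  exact path_from_Q q p hp

def TwoNbrs {W : Type*} (G : SimpleGraph W) (x : W) : Prop :=
  ∃ y z, y ≠ z ∧ ∀ w, G.Adj x w ↔ (w = y ∨ w = z)

lemma twoNbrs_iso {W W' : Type*} {G : SimpleGraph W} {G' : SimpleGraph W'}
    (σ : G ≃g G') (x : W) (h : TwoNbrs G x) : TwoNbrs G' (σ x) := by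
  obtain ⟨y, z, hyz, hiff⟩ := h
  refine ⟨σ y, σ z, fun h => hyz (σ.injective h), fun w => ?_⟩
  rw [← σ.apply_symm_apply w, σ.map_adj_iff, hiff]
  constructor
  · rintro (h | h) <;> [left; right] <;> rw [h]
  · rintro (h | h) <;> [left; right] <;> exact σ.injective (by simpa using h)

lemma twoNbrs_q (q : QV X) : TwoNbrs (CX X) (inr (inl q)) := by
  refine ⟨Sum.inl q.1.1, inr (inr q.1.2), Sum.inl_ne_inr, fun w => cx_adj_q⟩

lemma twoNbrs_r (r : X.edgeSet) : TwoNbrs (CX X) (inr (inr r)) := by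
  obtain ⟨e, he⟩ := r
  revert he
  induction e using Sym2.ind with
  | _ a b =>
  intro he
  have hadj : X.Adj a b := (X.mem_edgeSet).mp he
  set r : X.edgeSet := ⟨s(a, b), he⟩ with hr
  have hout : (r : Sym2 V) = s(a, b) := rfl
  have ha : a ∈ (r : Sym2 V) := Sym2.mem_mk_left _ _
  have hb : b ∈ (r : Sym2 V) := Sym2.mem_mk_right _ _
  refine ⟨inr (inl ⟨(a, r), ha⟩), inr (inl ⟨(b, r), hb⟩), ?_, ?_⟩
  · intro h
    apply hadj.ne
    have := Sum.inl_injective (Sum.inr_injective h)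
    have := congrArg (fun q : QV X => q.1.1) this
    exact this
  · intro w
    rw [cx_adj_r]
    constructor
    · rintro ⟨q, rfl, hq⟩
      have hmem : q.1.1 ∈ (r : Sym2 V) := by rw [← hq]; exact q.2
      rw [hout, Sym2.mem_iff] at hmem
      rcases hmem with h | h
      · left
        congr 1
        congr 1
        apply Subtype.ext
        apply Prod.ext h hq
      · right
        congr 1
        congr 1
        apply Subtype.ext
        apply Prod.ext h hq
    · rintro (rfl | rfl)
      · exact ⟨_, rfl, rfl⟩
      · exact ⟨_, rfl, rfl⟩

lemma twoNbrs_inl {v0 : V} (h : TwoNbrs (CX X) (Sum.inl v0)) :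
    ∃ a b : V, a ≠ b ∧ X.neighborSet v0 = {a, b} := by
  obtain ⟨y, z, hyz, hiff⟩ := h
  have hy : (CX X).Adj (Sum.inl v0) y := (hiff y).mpr (Or.inl rfl)
  have hz : (CX X).Adj (Sum.inl v0) z := (hiff z).mpr (Or.inr rfl)
  obtain ⟨qy, rfl, hqy⟩ := cx_adj_inl.mp hy
  obtain ⟨qz, rfl, hqz⟩ := cx_adj_inl.mp hz
  have hay : v0 ∈ (qy.1.2 : Sym2 V) := hqy ▸ qy.2
  have haz : v0 ∈ (qz.1.2 : Sym2 V) := hqz ▸ qz.2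
  set oy := Sym2.Mem.other hay with hoy
  set oz := Sym2.Mem.other haz with hoz
  have hsy : s(v0, oy) = (qy.1.2 : Sym2 V) := Sym2.other_spec hay
  have hsz : s(v0, oz) = (qz.1.2 : Sym2 V) := Sym2.other_spec haz
  have hadjy : X.Adj v0 oy := by rw [← SimpleGraph.mem_edgeSet, hsy]; exact qy.1.2.2
  have hadjz : X.Adj v0 oz := by rw [← SimpleGraph.mem_edgeSet, hsz]; exact qz.1.2.2
  have key : ∀ u : V, X.Adj v0 u → u = oy ∨ u = oz := by
    intro u hu
    set e : X.edgeSet := ⟨s(v0, u), hu⟩ with he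
    set q : QV X := ⟨(v0, e), Sym2.mem_mk_left _ _⟩ with hqdef
    have : (CX X).Adj (Sum.inl v0) (inr (inl q)) := cx_adj_inl.mpr ⟨q, rfl, rfl⟩
    rcases (hiff _).mp this with hh | hh
    · left
      have hq : q = qy := Sum.inl_injective (Sum.inr_injective hh)
      have : (e : Sym2 V) = (qy.1.2 : Sym2 V) := by rw [← hq]
      rw [← hsy] at this
      have : s(v0, u) = s(v0, oy) := this
      exact (Sym2.congr_right).mp this
    · right
      have hq : q = qz := Sum.inl_injective (Sum.inr_injective hh)
      have : (e : Sym2 V) = (qz.1.2 : Sym2 V) := by rw [← hq]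
      rw [← hsz] at this
      have : s(v0, u) = s(v0, oz) := this
      exact (Sym2.congr_right).mp this
  have hne : oy ≠ oz := by
    intro h
    apply hyz
    have : (qy.1.2 : Sym2 V) = (qz.1.2 : Sym2 V) := by rw [← hsy, ← hsz, h]
    have heq : qy.1.2 = qz.1.2 := Subtype.ext this
    have : qy = qz := Subtype.ext (Prod.ext (hqy.trans hqz.symm) heq)
    rw [this]
  refine ⟨oy, oz, hne, ?_⟩
  ext u
  simp only [SimpleGraph.mem_neighborSet, Set.mem_insert_iff, Set.mem_singleton_iff]
  exact ⟨key u, fun h => by rcases h with rfl | rfl <;> assumption⟩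

lemma iso_dist_le {W W' : Type*} {G : SimpleGraph W} {G' : SimpleGraph W'}
    (σ : G ≃g G') {x y : W} (hr : G.Reachable x y) :
    G'.dist (σ x) (σ y) ≤ G.dist x y := by
  obtain ⟨w, hw⟩ := hr.exists_walk_length_eq_dist
  calc G'.dist (σ x) (σ y) ≤ (w.map σ.toHom).length := SimpleGraph.dist_le _
    _ = G.dist x y := by rw [SimpleGraph.Walk.length_map, hw]

lemma iso_dist {W W' : Type*} {G : SimpleGraph W} {G' : SimpleGraph W'}
    (σ : G ≃g G') (hc : G.Preconnected) (x y : W) :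
    G'.dist (σ x) (σ y) = G.dist x y := by
  refine le_antisymm (iso_dist_le σ (hc x y)) ?_
  have hr' : G'.Reachable (σ x) (σ y) := by
    obtain ⟨w⟩ := hc x y
    exact ⟨w.map σ.toHom⟩
  have := iso_dist_le σ.symm hr'
  simpa using this

lemma two_regular_iso_cycle {V : Type} [Fintype V] {X : SimpleGraph V} (hconn : X.Connected)
    (hreg : ∀ v : V, ∃ a b : V, a ≠ b ∧ X.neighborSet v = {a, b}) :
    ∃ n, Nonempty (X ≃g SimpleGraph.cycleGraph n) := by
  classical
  obtain ⟨v0⟩ := hconn.nonempty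
  choose n1 n2 hne hset using hreg
  have hmem : ∀ v w : V, X.Adj v w ↔ (w = n1 v ∨ w = n2 v) := by
    intro v w
    rw [← SimpleGraph.mem_neighborSet, hset]
    simp [Set.mem_insert_iff]
  set other : V → V → V := fun u v => if u = n1 v then n2 v else n1 v with hother
  have hoadj : ∀ u v, X.Adj v (other u v) := by
    intro u v
    simp only [hother]
    split
    · exact (hmem v _).mpr (Or.inr rfl)
    · exact (hmem v _).mpr (Or.inl rfl)
  have hone : ∀ u v, other u v ≠ u := by
    intro u v
    simp only [hother]
    split
    · rename_i h; rw [h]; exact (hne v).symm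
    · rename_i h; exact fun hh => h hh.symm
  have huniq : ∀ u v w, X.Adj v u → X.Adj v w → w ≠ u → w = other u v := by
    intro u v w hu hw hwu
    rw [hmem] at hu hw
    simp only [hother]
    rcases hu with rfl | rfl <;> rcases hw with rfl | rfl <;> simp_all
  have hoo : ∀ u v, X.Adj v u → other (other u v) v = u := by
    intro u v h
    exact (huniq (other u v) v u (hoadj u v) h (fun hh => hone u v hh.symm)).symm
  set step : V × V → V × V := fun p => (p.2, other p.1 p.2) with hstep
  set F : ℕ → V × V := fun n => step^[n] (v0, n1 v0) with hFdef
  have hFsucc : ∀ n, F (n + 1) = step (F n) := by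
    intro n
    simp only [hFdef, Function.iterate_succ_apply']
  have hF1 : ∀ n, (F (n + 1)).1 = (F n).2 := fun n => by rw [hFsucc]
  have hF2 : ∀ n, (F (n + 1)).2 = other (F n).1 (F n).2 := fun n => by rw [hFsucc]
  have hadjF : ∀ n, X.Adj (F n).1 (F n).2 := by
    intro n
    induction n with
    | zero => exact (hmem v0 _).mpr (Or.inl rfl)
    | succ k ih =>
      rw [hF1, hF2]
      exact hoadj _ _
  set f : ℕ → V := fun n => (F n).1 with hfdef
  have hFf : ∀ n, F n = (f n, f (n + 1)) := by
    intro n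
    rw [Prod.ext_iff]
    exact ⟨rfl, (hF1 n).symm⟩
  have hadj : ∀ n, X.Adj (f n) (f (n + 1)) := by
    intro n
    have := hadjF n
    rwa [hFf n] at this
  have hf2 : ∀ n, f (n + 2) = other (f n) (f (n + 1)) := by
    intro n
    have := hF2 n
    rw [hFf n] at this
    calc f (n + 2) = (F (n + 1)).2 := by rw [hFf (n + 1)]
      _ = other (f n) (f (n + 1)) := this
  -- backward map
  set back : V × V → V × V := fun p => (other p.2 p.1, p.1) with hback
  have hbackF : ∀ n, back (F (n + 1)) = F n := by
    intro n
    rw [hFf (n + 1), hFf n]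
    simp only [hback]
    rw [Prod.ext_iff]
    refine ⟨?_, rfl⟩
    show other (f (n + 2)) (f (n + 1)) = f n
    rw [hf2 n]
    exact hoo (f n) (f (n + 1)) (hadj n).symm
  have hbackiter : ∀ k n, back^[k] (F (n + k)) = F n := by
    intro k
    induction k with
    | zero => intro n; rfl
    | succ j ih =>
      intro n
      have : n + (j + 1) = (n + 1) + j := by omega
      rw [this, Function.iterate_succ_apply', ih (n + 1), hbackF]
  have hper_ex : ∃ m, 0 < m ∧ F m = F 0 := by
    have : ¬ Function.Injective F := by
      intro hinj
      have : Function.Injective (fun n : Fin ((Fintype.card (V × V)) + 1) => F n.1) :=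
        fun a b h => Fin.ext (hinj h)
      have hcard := Fintype.card_le_of_injective _ this
      simp at hcard
    rw [Function.not_injective_iff] at this
    obtain ⟨i, j, hFij, hij⟩ := this
    rcases Nat.lt_or_ge i j with h | h
    · refine ⟨j - i, by omega, ?_⟩
      have h1 := hbackiter i 0
      have h2 := hbackiter i (j - i)
      rw [Nat.zero_add] at h1
      rw [Nat.sub_add_cancel h.le] at h2
      rw [← h1, ← h2, hFij]
    · have hji : j < i := by omega
      refine ⟨i - j, by omega, ?_⟩
      have h1 := hbackiter j 0
      have h2 := hbackiter j (i - j)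
      rw [Nat.zero_add] at h1
      rw [Nat.sub_add_cancel hji.le] at h2
      rw [← h1, ← h2, hFij]
  set m := Nat.find hper_ex with hmdef
  obtain ⟨hmpos, hmF⟩ : 0 < m ∧ F m = F 0 := Nat.find_spec hper_ex
  have hmin : ∀ k, 0 < k → k < m → F k ≠ F 0 := by
    intro k hk0 hkm hFk
    exact (Nat.find_min hper_ex hkm) ⟨hk0, hFk⟩
  have hper : ∀ n, F (n + m) = F n := by
    intro n
    induction n with
    | zero => rw [Nat.zero_add]; exact hmF
    | succ k ih =>
      have : k + 1 + m = (k + m) + 1 := by omega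
      rw [this, hFsucc, ih, ← hFsucc]
  have hmul : ∀ q r, F (r + m * q) = F r := by
    intro q
    induction q with
    | zero => intro r; simp
    | succ j ih =>
      intro r
      have : r + m * (j + 1) = (r + m * j) + m := by ring
      rw [this, hper, ih]
  have hmod : ∀ n, F n = F (n % m) := by
    intro n
    conv_lhs => rw [← Nat.mod_add_div n m]
    exact hmul (n / m) (n % m)
  have hdvd : ∀ k l, k ≤ l → F k = F l → m ∣ (l - k) := by
    intro k l hkl hF
    have h1 := hbackiter k 0
    have h2 := hbackiter k (l - k)
    rw [Nat.zero_add] at h1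
    rw [Nat.sub_add_cancel hkl] at h2
    have hd : F (l - k) = F 0 := by rw [← h2, ← hF, h1]
    rw [hmod (l - k)] at hd
    by_contra hnd
    have hpos : 0 < (l - k) % m := by
      rcases Nat.eq_zero_or_pos ((l - k) % m) with h | h
      · exact absurd (Nat.dvd_of_mod_eq_zero h) hnd
      · exact h
    exact hmin _ hpos (Nat.mod_lt _ hmpos) hd
  have hfper : ∀ n, f (n + m) = f n := fun n => by
    show (F (n + m)).1 = (F n).1
    rw [hper]
  have hfmod : ∀ n, f n = f (n % m) := fun n => by
    show (F n).1 = (F (n % m)).1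
    rw [← hmod]
  have hm3 : 3 ≤ m := by
    rcases Nat.lt_or_ge m 3 with h | h
    · exfalso
      interval_cases m
      · have := hmF
        rw [hFf 1, hFf 0] at this
        have h1 : f 1 = f 0 := congrArg Prod.fst this
        have := hadj 0
        rw [h1] at this
        exact this.ne rfl
      · have := hmF
        rw [hFf 2, hFf 0] at this
        have h1 : f 2 = f 0 := congrArg Prod.fst this
        rw [hf2 0] at h1
        exact hone (f 0) (f 1) h1
    · exact h
  have hnbr : ∀ n w, 1 ≤ n → X.Adj (f n) w → w = f (n + 1) ∨ w = f (n - 1) := by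
    intro n w hn hw
    obtain ⟨k, rfl⟩ : ∃ k, n = k + 1 := ⟨n - 1, by omega⟩
    have hprev : X.Adj (f (k + 1)) (f k) := (hadj k).symm
    have hnext : X.Adj (f (k + 1)) (f (k + 2)) := hadj (k + 1)
    have hnexteq : f (k + 2) = other (f k) (f (k + 1)) := hf2 k
    have hww : w = f k ∨ w ≠ f k := by tauto
    rcases hww with rfl | hwk
    · right; simp
    · left
      have : w = other (f k) (f (k + 1)) := huniq (f k) (f (k + 1)) w hprev hw hwk
      rw [← hnexteq] at this
      simpa using this
  have hsurj : ∀ v, ∃ n, f n = v := by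
    intro v
    have key : ∀ (a b : V), X.Walk a b → (∃ n, f n = a) → (∃ n, f n = b) := by
      intro a b w
      induction w with
      | nil => exact id
      | @cons x y z hxy p ih =>
        intro ⟨n, hn⟩
        apply ih
        have hadj' : X.Adj (f (n + m)) y := by rw [hfper, hn]; exact hxy
        have := hnbr (n + m) y (by omega) hadj'
        rcases this with h | h
        · exact ⟨n + m + 1, h.symm⟩
        · exact ⟨n + m - 1, h.symm⟩
    exact key v0 v (hconn.preconnected v0 v).some ⟨0, rfl⟩
  have hper2 : ∀ r, F (r + 2 * m) = F r := by
    intro r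
    have := hmul 2 r
    rwa [show r + m * 2 = r + 2 * m by ring] at this
  have hswapstep : ∀ n, step (Prod.swap (F (n + 1))) = Prod.swap (F n) := by
    intro n
    rw [hFf (n + 1), hFf n, Prod.swap_prod_mk, Prod.swap_prod_mk]
    simp only [hstep]
    rw [Prod.ext_iff]
    refine ⟨rfl, ?_⟩
    show other (f (n + 2)) (f (n + 1)) = f n
    rw [hf2 n]
    exact hoo (f n) (f (n + 1)) (hadj n).symm
  have hinj : ∀ i j, i < j → j < m → f i ≠ f j := by
    intro i j hij hjm heq
    set i' := i + m with hi'
    set j' := j + m with hj'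
    have hfij : f j' = f i' := by rw [hfper, hfper, heq]
    have hadj' : X.Adj (f i') (f (j' + 1)) := by
      rw [← hfij]; exact hadj j'
    rcases hnbr i' (f (j' + 1)) (by omega) hadj' with hcase | hcase
    · have hFij : F i' = F j' := by rw [hFf, hFf, hfij, hcase]
      have hd := hdvd i' j' (by omega) hFij
      have hd' : m ∣ j - i := by
        have : j' - i' = j - i := by omega
        rwa [this] at hd
      have := Nat.le_of_dvd (by omega) hd'
      omega
    · -- palindrome case : hcase : f (j' + 1) = f (i' - 1)
      have hbase : F j' = Prod.swap (F (i' - 1)) := by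
        rw [hFf j', hFf (i' - 1), show i' - 1 + 1 = i' by omega, Prod.swap_prod_mk]
        rw [Prod.ext_iff]
        exact ⟨hfij, hcase⟩
      have hpal : ∀ t, t ≤ i' - 1 → F (j' + t) = Prod.swap (F (i' - 1 - t)) := by
        intro t
        induction t with
        | zero => intro _; simpa using hbase
        | succ s ih =>
          intro hs
          have h1 : j' + (s + 1) = (j' + s) + 1 := by omega
          rw [h1, hFsucc, ih (by omega),
            show i' - 1 - s = (i' - 1 - (s + 1)) + 1 by omega, hswapstep]
      set D := i' - 1 + 2 * m - j' with hD
      rcases Nat.even_or_odd D with ⟨t, ht⟩ | ⟨t, ht⟩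
      · have htle : t ≤ i' - 1 := by omega
        have hcol := hpal t htle
        have hc1 : (i' - 1 - t) + 2 * m = j' + t := by omega
        have hFF : F (j' + t) = F (i' - 1 - t) := by rw [← hc1, hper2]
        rw [hFF, hFf (i' - 1 - t), Prod.swap_prod_mk, Prod.mk.injEq] at hcol
        exact (hadj (i' - 1 - t)).ne hcol.1
      · have htle : t ≤ i' - 1 := by omega
        have hcol := hpal t htle
        have hc1 : (i' - 1 - t) + 2 * m = (j' + t) + 1 := by omega
        have hFF : F ((j' + t) + 1) = F (i' - 1 - t) := by rw [← hc1, hper2]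
        rw [← hFF, hFf (j' + t), hFf ((j' + t) + 1), Prod.swap_prod_mk, Prod.mk.injEq] at hcol
        have hx : f (j' + t) = f ((j' + t) + 2) := hcol.1
        rw [hf2 (j' + t)] at hx
        exact hone (f (j' + t)) (f (j' + t + 1)) hx.symm
  have hinj' : ∀ i j, i < m → j < m → f i = f j → i = j := by
    intro i j him hjm heq
    rcases Nat.lt_trichotomy i j with h | h | h
    · exact absurd heq (hinj i j h hjm)
    · exact h
    · exact absurd heq.symm (hinj j i h him)
  haveI : NeZero m := ⟨by omega⟩
  have hm1 : 1 < m := Nat.lt_of_lt_of_le (by norm_num) hm3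
  have hval1 : (1 : Fin m).val = 1 := by
    rw [Fin.val_one']
    exact Nat.mod_eq_of_lt hm1
  have hvaladd : ∀ u : Fin m, ((u + 1 : Fin m)).val = (u.val + 1) % m := by
    intro u
    rw [Fin.val_add, hval1]
  set e : Fin m → V := fun k => f k.1 with he
  have heinj : Function.Injective e := by
    intro a b hab
    exact Fin.ext (hinj' a.1 b.1 a.2 b.2 hab)
  have hesurj : Function.Surjective e := by
    intro v
    obtain ⟨n, hn⟩ := hsurj v
    refine ⟨⟨n % m, Nat.mod_lt _ hmpos⟩, ?_⟩
    show f (n % m) = v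
    rw [← hfmod]
    exact hn
  have hstep_adj : ∀ u : Fin m, X.Adj (e u) (e (u + 1)) := by
    intro u
    show X.Adj (f u.1) (f ((u + 1 : Fin m)).val)
    rw [hvaladd, ← hfmod]
    exact hadj u.1
  have hiff : ∀ u v : Fin m, X.Adj (e u) (e v) ↔ (cycleGraph m).Adj u v := by
    intro u v
    rw [cycleGraph_adj']
    constructor
    · intro h
      have h' : X.Adj (f (u.1 + m)) (f v.1) := by rw [hfper]; exact h
      rcases hnbr (u.1 + m) (f v.1) (by omega) h' with hc | hc
      · right
        have : f v.1 = f ((u.1 + 1) % m) := by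
          rw [hc, show u.1 + m + 1 = (u.1 + 1) + m by ring, hfper, hfmod]
        have hv : v.1 = (u.1 + 1) % m :=
          hinj' v.1 ((u.1 + 1) % m) v.2 (Nat.mod_lt _ hmpos) this
        have hveq : v = u + 1 := by
          apply Fin.ext
          rw [hvaladd]
          exact hv
        rw [hveq, add_sub_cancel_left, hval1]
      · left
        have : f v.1 = f ((u.1 + m - 1) % m) := by rw [hc, hfmod]
        have hv : v.1 = (u.1 + m - 1) % m :=
          hinj' v.1 ((u.1 + m - 1) % m) v.2 (Nat.mod_lt _ hmpos) this
        have hueq : u = v + 1 := by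
          apply Fin.ext
          rw [hvaladd]
          rcases Nat.eq_zero_or_pos u.1 with h0 | h0
          · have : (u.1 + m - 1) % m = m - 1 := by
              rw [h0, Nat.zero_add, Nat.mod_eq_of_lt (by omega)]
            rw [hv, this, h0, Nat.sub_add_cancel hmpos, Nat.mod_self]
          · have h1 : u.1 + m - 1 = m + (u.1 - 1) := by omega
            have : (u.1 + m - 1) % m = u.1 - 1 := by
              rw [h1, Nat.add_mod_left, Nat.mod_eq_of_lt (by omega)]
            rw [hv, this, Nat.sub_add_cancel h0, Nat.mod_eq_of_lt u.2]
        rw [hueq, add_sub_cancel_left, hval1]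
    · intro h
      rcases h with h | h
      · -- (u - v).val = 1, so u = v + 1
        have : u - v = 1 := Fin.ext (by rw [hval1]; exact h)
        have hueq : u = v + 1 := by
          rw [sub_eq_iff_eq_add] at this
          rw [this, add_comm]
        rw [hueq]
        exact (hstep_adj v).symm
      · have : v - u = 1 := Fin.ext (by rw [hval1]; exact h)
        have hveq : v = u + 1 := by
          rw [sub_eq_iff_eq_add] at this
          rw [this, add_comm]
        rw [hveq]
        exact hstep_adj u
  refine ⟨m, ⟨?_⟩⟩
  have ψ : cycleGraph m ≃g X :=
    ⟨Equiv.ofBijective e ⟨heinj, hesurj⟩, by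
      intro a b
      exact hiff a b⟩
  exact ψ.symm

lemma blocks_pointwise (hconn : X.Connected)
    (hv0 : ∃ v0 : V, ¬ ∃ a b : V, a ≠ b ∧ X.neighborSet v0 = {a, b})
    (σ : CX X ≃g CX X) :
    (∀ a, ∃ a', σ (Sum.inl a) = Sum.inl a') ∧
    (∀ q, ∃ q', σ (inr (inl q)) = inr (inl q')) ∧
    (∀ r, ∃ r', σ (inr (inr r)) = inr (inr r')) := by
  obtain ⟨v0, hv0⟩ := hv0
  have hpc := (cx_connected hconn).preconnected
  have himg : ∃ w0, σ (Sum.inl v0) = Sum.inl w0 := by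
    rcases h : σ (Sum.inl v0) with w0 | q | r
    · exact ⟨w0, rfl⟩
    · exfalso; apply hv0; apply twoNbrs_inl
      have := twoNbrs_iso σ.symm _ (twoNbrs_q q)
      erw [← h, σ.symm_apply_apply] at this
      exact this
    · exfalso; apply hv0; apply twoNbrs_inl
      have := twoNbrs_iso σ.symm _ (twoNbrs_r r)
      erw [← h, σ.symm_apply_apply] at this
      exact this
  obtain ⟨w0, hw0⟩ := himg
  have hdist : ∀ x, (CX X).dist (σ x) (Sum.inl w0) = (CX X).dist x (Sum.inl v0) := by
    intro x
    rw [← hw0]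
    exact iso_dist σ hpc x _
  refine ⟨?_, ?_, ?_⟩
  · intro a
    have h0 := dist_mod_P hconn v0 a
    rcases h : σ (Sum.inl a) with a' | q' | r'
    · exact ⟨a', rfl⟩
    · exfalso
      have h1 := dist_mod_Q hconn w0 q'
      erw [← h, hdist] at h1
      omega
    · exfalso
      have h1 := dist_mod_R hconn w0 r'
      erw [← h, hdist] at h1
      omega
  · intro q
    have h0 := dist_mod_Q hconn v0 q
    rcases h : σ (inr (inl q)) with a' | q' | r'
    · exfalso
      have h1 := dist_mod_P hconn w0 a'
      erw [← h, hdist] at h1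
      omega
    · exact ⟨q', rfl⟩
    · exfalso
      have h1 := dist_mod_R hconn w0 r'
      erw [← h, hdist] at h1
      omega
  · intro r
    have h0 := dist_mod_R hconn v0 r
    rcases h : σ (inr (inr r)) with a' | q' | r'
    · exfalso
      have h1 := dist_mod_P hconn w0 a'
      erw [← h, hdist] at h1
      omega
    · exfalso
      have h1 := dist_mod_Q hconn w0 q'
      erw [← h, hdist] at h1
      omega
    · exact ⟨r', rfl⟩

end Aux

open Sum in
/-- Every automorphism of `C_X` (for `X` connected, not a cycle) preserves the
partition of the vertices into the blocks `P`, `Q`, `R`: the image of each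
block is again a block. -/
theorem aut_CX_preserves_partition {V : Type} [Fintype V] (X : SimpleGraph V)
    (hconn : X.Connected)
    (hnotcycle : ∀ n : ℕ, IsEmpty (X ≃g SimpleGraph.cycleGraph n))
    (σ : CX X ≃g CX X) :
    ∀ B ∈ ({Pblock X, Qblock X, Rblock X} : Set (Set (CXVert X))),
      (⇑σ) '' B ∈ ({Pblock X, Qblock X, Rblock X} : Set (Set (CXVert X))) := by
  classical
  have hv0 : ∃ v0 : V, ¬ ∃ a b : V, a ≠ b ∧ X.neighborSet v0 = {a, b} := by
    by_contra hc
    push_neg at hc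
    obtain ⟨n, ⟨e⟩⟩ := two_regular_iso_cycle hconn (fun v => by
      obtain ⟨a, b, hab, hset⟩ := hc v
      exact ⟨a, b, hab, hset⟩)
    exact (hnotcycle n).false e
  have hbp := blocks_pointwise hconn hv0 σ
  have hbp' := blocks_pointwise hconn hv0 σ.symm
  intro B hB
  simp only [Set.mem_insert_iff, Set.mem_singleton_iff] at hB ⊢
  rcases hB with rfl | rfl | rfl
  · left
    ext x
    constructor
    · rintro ⟨y, ⟨a, rfl⟩, rfl⟩
      obtain ⟨a', ha'⟩ := hbp.1 a
      exact ⟨a', ha'.symm⟩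
    · rintro ⟨a, rfl⟩
      obtain ⟨a'', ha''⟩ := hbp'.1 a
      exact ⟨Sum.inl a'', ⟨a'', rfl⟩, by erw [← ha'', σ.apply_symm_apply]⟩
  · right; left
    ext x
    constructor
    · rintro ⟨y, ⟨q, rfl⟩, rfl⟩
      obtain ⟨q', hq'⟩ := hbp.2.1 q
      exact ⟨q', hq'.symm⟩
    · rintro ⟨q, rfl⟩
      obtain ⟨q'', hq''⟩ := hbp'.2.1 q
      exact ⟨inr (inl q''), ⟨q'', rfl⟩, by erw [← hq'', σ.apply_symm_apply]; rfl⟩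
  · right; right
    ext x
    constructor
    · rintro ⟨y, ⟨r, rfl⟩, rfl⟩
      obtain ⟨r', hr'⟩ := hbp.2.2 r
      exact ⟨r', hr'.symm⟩
    · rintro ⟨r, rfl⟩
      obtain ⟨r'', hr''⟩ := hbp'.2.2 r
      exact ⟨inr (inr r''), ⟨r'', rfl⟩, by erw [← hr'', σ.apply_symm_apply]; rfl⟩
end

section
/- If X is a connected graph that is not a cycle, then in the graph C_X (each edge of X subdivided into a path of length four), all vertices of Q and R have degree two, and the set P equals the set of vertices at distance divisible by four from any fixed vertex p of P of degree not equal to two. -/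
namespace CXP
open SimpleGraph
variable {V : Type} {X : SimpleGraph V}

abbrev QV (X : SimpleGraph V) := {p : V × X.edgeSet // p.1 ∈ (p.2 : Sym2 V)}

lemma adj_pq (v : V) (q : QV X) : (CX X).Adj (Sum.inl v) (Sum.inr (Sum.inl q)) ↔ v = q.1.1 := by
  simp [CX, CXVert, SimpleGraph.fromRel_adj]

lemma adj_qr (q : QV X) (r : X.edgeSet) :
    (CX X).Adj (Sum.inr (Sum.inl q)) (Sum.inr (Sum.inr r)) ↔ q.1.2 = r := by
  simp [CX, CXVert, SimpleGraph.fromRel_adj]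

lemma adj_pp (v w : V) : ¬ (CX X).Adj (Sum.inl v) (Sum.inl w) := by
  simp [CX, CXVert, SimpleGraph.fromRel_adj]

lemma adj_pr (v : V) (r : X.edgeSet) : ¬ (CX X).Adj (Sum.inl v) (Sum.inr (Sum.inr r)) := by
  simp [CX, CXVert, SimpleGraph.fromRel_adj]

lemma adj_qq (q q' : QV X) : ¬ (CX X).Adj (Sum.inr (Sum.inl q)) (Sum.inr (Sum.inl q')) := by
  simp [CX, CXVert, SimpleGraph.fromRel_adj]

lemma adj_rr (r r' : X.edgeSet) : ¬ (CX X).Adj (Sum.inr (Sum.inr r)) (Sum.inr (Sum.inr r')) := by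
  simp [CX, CXVert, SimpleGraph.fromRel_adj]


lemma inl_inj {v w : V} : (Sum.inl v : CXVert X) = Sum.inl w ↔ v = w :=
  ⟨fun h => Sum.inl.inj h, fun h => by rw [h]⟩

lemma inrl_inj {q q' : QV X} : (Sum.inr (Sum.inl q) : CXVert X) = Sum.inr (Sum.inl q') ↔ q = q' :=
  ⟨fun h => Sum.inl.inj (Sum.inr.inj h), fun h => by rw [h]⟩

lemma inrr_inj {r r' : X.edgeSet} : (Sum.inr (Sum.inr r) : CXVert X) = Sum.inr (Sum.inr r') ↔ r = r' :=
  ⟨fun h => Sum.inr.inj (Sum.inr.inj h), fun h => by rw [h]⟩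

lemma inl_ne_inr {v : V} {x} : (Sum.inl v : CXVert X) ≠ Sum.inr x :=
  fun h => by cases h

lemma inrl_ne_inrr {q : QV X} {r : X.edgeSet} :
    (Sum.inr (Sum.inl q) : CXVert X) ≠ Sum.inr (Sum.inr r) :=
  fun h => by cases h

lemma nbhdQ (q : QV X) : (CX X).neighborSet (Sum.inr (Sum.inl q)) =
    {Sum.inl q.1.1, Sum.inr (Sum.inr q.1.2)} := by
  ext w
  erw [SimpleGraph.mem_neighborSet, Set.mem_insert_iff, Set.mem_singleton_iff]
  rcases w with v | q' | r
  · erw [SimpleGraph.adj_comm, adj_pq, inl_inj]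
    simp [(inl_ne_inr (X := X)).symm, eq_comm]
  · simp [adj_qq, inrl_inj, fun q : QV X => (inrl_ne_inrr (X := X) (q := q)),
      (inl_ne_inr (X := X)).symm]
    exact fun h => inrl_ne_inrr h
  · erw [adj_qr, inrr_inj]
    simp [inl_ne_inr (X := X)]
    exact eq_comm

lemma degQ (q : QV X) : ((CX X).neighborSet (Sum.inr (Sum.inl q))).ncard = 2 := by
  rw [nbhdQ]
  exact Set.ncard_pair fun h => inl_ne_inr h

lemma degR (r : X.edgeSet) : ((CX X).neighborSet (Sum.inr (Sum.inr r))).ncard = 2 := by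
  obtain ⟨s, hs⟩ := r
  induction s using Sym2.ind with
  | _ a b =>
  have hadj : X.Adj a b := hs
  have hne : a ≠ b := hadj.ne
  have ha : a ∈ (s(a,b) : Sym2 V) := Sym2.mem_mk_left a b
  have hb : b ∈ (s(a,b) : Sym2 V) := Sym2.mem_mk_right a b
  set e : X.edgeSet := ⟨s(a,b), hs⟩ with he
  have key : (CX X).neighborSet (Sum.inr (Sum.inr e)) =
      {Sum.inr (Sum.inl ⟨(a, e), ha⟩), Sum.inr (Sum.inl ⟨(b, e), hb⟩)} := by
    ext w
    erw [SimpleGraph.mem_neighborSet, Set.mem_insert_iff, Set.mem_singleton_iff]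
    rcases w with v | q' | r'
    · erw [SimpleGraph.adj_comm]
      simp only [adj_pr, false_iff]
      rintro (h | h) <;> exact inl_ne_inr h
    · erw [SimpleGraph.adj_comm, adj_qr, inrl_inj, inrl_inj]
      constructor
      · intro h
        have h1 := q'.2
        rw [h] at h1
        rcases Sym2.mem_iff.mp h1 with h2 | h2
        · exact Or.inl (Subtype.ext (Prod.ext h2 h))
        · exact Or.inr (Subtype.ext (Prod.ext h2 h))
      · rintro (rfl | rfl) <;> rfl
    · simp only [adj_rr, false_iff]
      rintro (h | h) <;> exact inrl_ne_inrr h.symm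
  rw [key]
  refine Set.ncard_pair fun h => hne ?_
  have := Subtype.mk.injEq _ _ _ _ ▸ inrl_inj.mp h
  exact congrArg (fun q : QV X => q.1.1) (inrl_inj.mp h)

lemma q_adj_other (q : QV X) : X.Adj q.1.1 (Sym2.Mem.other q.2) := by
  have h1 : (q.1.2 : Sym2 V) ∈ X.edgeSet := q.1.2.2
  rw [← Sym2.other_spec q.2] at h1
  exact h1

noncomputable def m (p : V) : CXVert X → ℕ
  | Sum.inl v => 4 * X.dist p v
  | Sum.inr (Sum.inl q) =>
      min (4 * X.dist p q.1.1 + 1) (4 * X.dist p (Sym2.Mem.other q.2) + 3)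
  | Sum.inr (Sum.inr r) =>
      4 * Sym2.lift ⟨fun a b => min (X.dist p a) (X.dist p b),
        fun _ _ => min_comm _ _⟩ (r : Sym2 V) + 2

lemma dist_le_succ (hconn : X.Connected) {u v : V} (h : X.Adj u v) (p : V) :
    X.dist p v ≤ X.dist p u + 1 := by
  have := hconn.dist_triangle (u := p) (v := u) (w := v)
  have h1 : X.dist u v = 1 := (SimpleGraph.dist_eq_one_iff_adj).mpr h
  omega

lemma m_r (p : V) (r : X.edgeSet) {a b : V} (hab : (r : Sym2 V) = s(a,b)) :
    m p (Sum.inr (Sum.inr r)) = 4 * min (X.dist p a) (X.dist p b) + 2 := by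
  simp only [m, hab, Sym2.lift_mk]

lemma m_lip (hconn : X.Connected) (p : V) {x y : CXVert X} (hxy : (CX X).Adj x y) :
    m p y ≤ m p x + 1 := by
  have hrel := hxy.2
  rcases x with v | q | r <;> rcases y with v' | q' | r'
  · exact absurd hxy (adj_pp _ _)
  · -- x = inl v, y = q'
    have hv : v = q'.1.1 := by
      rcases hrel with h | h
      · exact h
      · exact h.elim
    subst hv
    simp only [m]
    exact le_trans (min_le_left _ _) (by omega)
  · exact absurd hxy (adj_pr _ _)
  · -- x = q, y = inl v'
    have hv : v' = q.1.1 := by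
      rcases hrel with h | h
      · exact h.elim
      · exact h
    subst hv
    have hadj := q_adj_other q
    have h1 := dist_le_succ hconn hadj.symm p
    simp only [m]
    omega
  · exact absurd hxy (adj_qq _ _)
  · -- x = q, y = r'
    have hr : q.1.2 = r' := by
      rcases hrel with h | h
      · exact h
      · exact h.elim
    subst hr
    rw [m_r p q.1.2 (Sym2.other_spec q.2).symm]
    have hadj := q_adj_other q
    have h1 := dist_le_succ hconn hadj p
    have h2 := dist_le_succ hconn hadj.symm p
    simp only [m]
    omega
  · exact absurd hxy.symm (adj_pr _ _)
  · -- x = r, y = q'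
    have hr : q'.1.2 = r := by
      rcases hrel with h | h
      · exact h.elim
      · exact h
    subst hr
    rw [m_r p q'.1.2 (Sym2.other_spec q'.2).symm]
    have hadj := q_adj_other q'
    have h1 := dist_le_succ hconn hadj p
    have h2 := dist_le_succ hconn hadj.symm p
    simp only [m]
    omega
  · exact absurd hxy (adj_rr _ _)

lemma m_le_walk (hconn : X.Connected) (p : V) {x y : CXVert X} (W : (CX X).Walk x y) :
    m p y ≤ m p x + W.length := by
  induction W with
  | nil => simp
  | cons h W ih =>
    have := m_lip hconn p h
    simp only [SimpleGraph.Walk.length_cons]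
    omega

def quadWalk {u v : V} (h : X.Adj u v) : (CX X).Walk (Sum.inl u) (Sum.inl v) :=
  let e : X.edgeSet := ⟨s(u,v), h⟩
  let q1 : QV X := ⟨(u, e), Sym2.mem_mk_left u v⟩
  let q2 : QV X := ⟨(v, e), Sym2.mem_mk_right u v⟩
  SimpleGraph.Walk.cons ((adj_pq u q1).mpr rfl)
    (SimpleGraph.Walk.cons ((adj_qr q1 e).mpr rfl)
      (SimpleGraph.Walk.cons ((adj_qr q2 e).mpr rfl).symm
        (SimpleGraph.Walk.cons ((adj_pq v q2).mpr rfl).symm SimpleGraph.Walk.nil)))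

@[simp] lemma quadWalk_length {u v : V} (h : X.Adj u v) : (quadWalk h).length = 4 := rfl

def liftWalk {u v : V} : X.Walk u v → (CX X).Walk (Sum.inl u) (Sum.inl v)
  | SimpleGraph.Walk.nil => SimpleGraph.Walk.nil
  | SimpleGraph.Walk.cons h W => (quadWalk h).append (liftWalk W)

@[simp] lemma liftWalk_length {u v : V} (W : X.Walk u v) :
    (liftWalk W).length = 4 * W.length := by
  induction W with
  | nil => rfl
  | cons h W ih =>
    simp [liftWalk, SimpleGraph.Walk.length_append, ih, SimpleGraph.Walk.length_cons]
    erw [SimpleGraph.Walk.length_append, ih, quadWalk_length]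
    ring

lemma dist_pp (hconn : X.Connected) (p v : V) :
    (CX X).dist (Sum.inl p) (Sum.inl v) = 4 * X.dist p v := by
  obtain ⟨W, hW⟩ := hconn.exists_walk_length_eq_dist p v
  have hub : (CX X).dist (Sum.inl p) (Sum.inl v) ≤ 4 * X.dist p v := by
    have := SimpleGraph.dist_le (liftWalk W)
    rwa [liftWalk_length, hW] at this
  have hreach : (CX X).Reachable (Sum.inl p) (Sum.inl v) := ⟨liftWalk W⟩
  obtain ⟨W2, hW2⟩ := hreach.exists_walk_length_eq_dist
  have hlb := m_le_walk hconn p W2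
  simp only [m, SimpleGraph.dist_self, Nat.mul_zero, Nat.zero_add] at hlb
  rw [hW2] at hlb
  omega

lemma dist_q (hconn : X.Connected) (p : V) (q : QV X) :
    (CX X).dist (Sum.inl p) (Sum.inr (Sum.inl q)) = m p (Sum.inr (Sum.inl q)) := by
  -- upper bounds
  obtain ⟨W, hW⟩ := hconn.exists_walk_length_eq_dist p q.1.1
  have h1 : (CX X).dist (Sum.inl p) (Sum.inr (Sum.inl q)) ≤ 4 * X.dist p q.1.1 + 1 := by
    have := SimpleGraph.dist_le ((liftWalk W).concat ((adj_pq q.1.1 q).mpr rfl))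
    erw [SimpleGraph.Walk.length_concat, liftWalk_length, hW] at this
    exact this
  obtain ⟨W2, hW2⟩ := hconn.exists_walk_length_eq_dist p (Sym2.Mem.other q.2)
  have h2 : (CX X).dist (Sum.inl p) (Sum.inr (Sum.inl q)) ≤
      4 * X.dist p (Sym2.Mem.other q.2) + 3 := by
    have ho : Sym2.Mem.other q.2 ∈ (q.1.2 : Sym2 V) := Sym2.other_mem q.2
    let q2 : QV X := ⟨(Sym2.Mem.other q.2, q.1.2), ho⟩
    have := SimpleGraph.dist_le ((((liftWalk W2).concat ((adj_pq _ q2).mpr rfl)).concat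
      ((adj_qr q2 q.1.2).mpr rfl)).concat ((adj_qr q q.1.2).mpr rfl).symm)
    erw [SimpleGraph.Walk.length_concat, SimpleGraph.Walk.length_concat,
      SimpleGraph.Walk.length_concat, liftWalk_length, hW2] at this
    omega
  -- lower bound
  have hreach : (CX X).Reachable (Sum.inl p) (Sum.inr (Sum.inl q)) :=
    ⟨(liftWalk W).concat ((adj_pq q.1.1 q).mpr rfl)⟩
  obtain ⟨W3, hW3⟩ := hreach.exists_walk_length_eq_dist
  have hlb := m_le_walk hconn p W3
  simp only [m, SimpleGraph.dist_self, Nat.mul_zero, Nat.zero_add] at hlb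
  rw [hW3] at hlb
  simp only [m]
  omega

lemma dist_r (hconn : X.Connected) (p : V) (r : X.edgeSet) :
    (CX X).dist (Sum.inl p) (Sum.inr (Sum.inr r)) = m p (Sum.inr (Sum.inr r)) := by
  obtain ⟨s, hs⟩ := r
  induction s using Sym2.ind with
  | _ a b =>
  have hadj : X.Adj a b := hs
  set e : X.edgeSet := ⟨s(a,b), hs⟩ with he
  have hm : m p (Sum.inr (Sum.inr e)) = 4 * min (X.dist p a) (X.dist p b) + 2 :=
    m_r p e rfl
  let q1 : QV X := ⟨(a, e), Sym2.mem_mk_left a b⟩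
  let q2 : QV X := ⟨(b, e), Sym2.mem_mk_right a b⟩
  obtain ⟨Wa, hWa⟩ := hconn.exists_walk_length_eq_dist p a
  obtain ⟨Wb, hWb⟩ := hconn.exists_walk_length_eq_dist p b
  have h1 : (CX X).dist (Sum.inl p) (Sum.inr (Sum.inr e)) ≤ 4 * X.dist p a + 2 := by
    have := SimpleGraph.dist_le (((liftWalk Wa).concat ((adj_pq a q1).mpr rfl)).concat
      ((adj_qr q1 e).mpr rfl))
    erw [SimpleGraph.Walk.length_concat, SimpleGraph.Walk.length_concat,
      liftWalk_length, hWa] at this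
    omega
  have h2 : (CX X).dist (Sum.inl p) (Sum.inr (Sum.inr e)) ≤ 4 * X.dist p b + 2 := by
    have := SimpleGraph.dist_le (((liftWalk Wb).concat ((adj_pq b q2).mpr rfl)).concat
      ((adj_qr q2 e).mpr rfl))
    erw [SimpleGraph.Walk.length_concat, SimpleGraph.Walk.length_concat,
      liftWalk_length, hWb] at this
    omega
  have hreach : (CX X).Reachable (Sum.inl p) (Sum.inr (Sum.inr e)) :=
    ⟨((liftWalk Wa).concat ((adj_pq a q1).mpr rfl)).concat ((adj_qr q1 e).mpr rfl)⟩
  obtain ⟨W3, hW3⟩ := hreach.exists_walk_length_eq_dist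
  have hlb := m_le_walk hconn p W3
  simp only [m, SimpleGraph.dist_self, Nat.mul_zero, Nat.zero_add] at hlb
  rw [hW3] at hlb
  have hlb2 : 4 * min (X.dist p a) (X.dist p b) + 2 ≤
      (CX X).dist (Sum.inl p) (Sum.inr (Sum.inr e)) := by
    simpa [Sym2.lift_mk, he] using hlb
  rw [hm]
  omega

end CXP

/-- If `X` is connected and not a cycle, then in `C_X` all vertices of `Q` and
`R` have degree two, and `P` is exactly the set of vertices whose distance from
any fixed vertex `p ∈ P` of degree `≠ 2` is divisible by four. -/
theorem CX_degrees_and_P_by_distance {V : Type} [Fintype V] (X : SimpleGraph V)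
    (hconn : X.Connected)
    (hnotcycle : ∀ n : ℕ, IsEmpty (X ≃g SimpleGraph.cycleGraph n)) :
    (∀ q, ((CX X).neighborSet (Sum.inr (Sum.inl q))).ncard = 2) ∧
    (∀ r, ((CX X).neighborSet (Sum.inr (Sum.inr r))).ncard = 2) ∧
    (∀ p : V, (X.neighborSet p).ncard ≠ 2 →
      Set.range (Sum.inl : V → CXVert X) =
        {w : CXVert X | (CX X).dist (Sum.inl p) w % 4 = 0}) := by
  refine ⟨CXP.degQ, CXP.degR, fun p _ => ?_⟩
  ext w
  simp only [Set.mem_range, Set.mem_setOf_eq]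
  constructor
  · rintro ⟨v, rfl⟩
    show (CX X).dist (Sum.inl p) (Sum.inl v) % 4 = 0
    rw [CXP.dist_pp hconn]
    omega
  · intro hw
    rcases w with v | q | r
    · exact ⟨v, rfl⟩
    · exfalso
      replace hw : (CX X).dist (Sum.inl p) (Sum.inr (Sum.inl q)) % 4 = 0 := hw
      rw [CXP.dist_q hconn] at hw
      simp only [CXP.m] at hw
      omega
    · exfalso
      replace hw : (CX X).dist (Sum.inl p) (Sum.inr (Sum.inr r)) % 4 = 0 := hw
      rw [CXP.dist_r hconn] at hw
      simp only [CXP.m] at hw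
      omega
end

section
/- Let X be a finite bipartite graph. Then the graph C_X obtained from X by replacing every edge with a path of length four is the comparability graph of the intersection of four linear orders; i.e., C_X has order dimension at most 4. -/
set_option linter.unusedSectionVars false
set_option linter.unusedVariables false

open Classical

noncomputable section CXProof

namespace CXProof

variable {V : Type} [Fintype V] {X : SimpleGraph V}

/-- intermediate vertices -/
abbrev Qt (X : SimpleGraph V) := {p : V × X.edgeSet // p.1 ∈ (p.2 : Sym2 V)}

local instance : Fintype X.edgeSet := Fintype.ofFinite _
local instance : Fintype (Qt X) := Fintype.ofFinite _

section Endpoints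

variable (C : X.Coloring (Fin 2))

/-- the endpoint of an edge having color 0 -/
def av (e : X.edgeSet) : V :=
  if C (e : Sym2 V).out.1 = 0 then (e : Sym2 V).out.1 else (e : Sym2 V).out.2

/-- the endpoint of an edge having color 1 -/
def bv (e : X.edgeSet) : V :=
  if C (e : Sym2 V).out.1 = 0 then (e : Sym2 V).out.2 else (e : Sym2 V).out.1

lemma sym2_eq_mk (e : Sym2 V) : e = s(e.out.1, e.out.2) := by
  conv_lhs => rw [← e.out_eq]

lemma adj_out (e : X.edgeSet) : X.Adj (e : Sym2 V).out.1 (e : Sym2 V).out.2 := by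
  rw [← SimpleGraph.mem_edgeSet, ← sym2_eq_mk]; exact e.2

lemma two_cases (x : Fin 2) : x = 0 ∨ x = 1 := by omega

lemma C_av (e : X.edgeSet) : C (av C e) = 0 := by
  have h := C.valid (adj_out e)
  unfold av; split
  · assumption
  · rcases two_cases (C (e : Sym2 V).out.1) with h1 | h1
    · tauto
    · rcases two_cases (C (e : Sym2 V).out.2) with h2 | h2
      · exact h2
      · rw [h1, h2] at h; tauto

lemma C_bv (e : X.edgeSet) : C (bv C e) = 1 := by
  have h := C.valid (adj_out e)
  unfold bv; split
  · rcases two_cases (C (e : Sym2 V).out.2) with h2 | h2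
    · exfalso; apply h; rw [h2]; assumption
    · exact h2
  · rcases two_cases (C (e : Sym2 V).out.1) with h1 | h1
    · tauto
    · exact h1

lemma mem_av_bv (e : X.edgeSet) {v : V} (h : v ∈ (e : Sym2 V)) :
    v = av C e ∨ v = bv C e := by
  rw [sym2_eq_mk (e : Sym2 V), Sym2.mem_iff] at h
  unfold av bv; split <;> tauto

lemma av_ne_bv (e : X.edgeSet) : av C e ≠ bv C e := by
  intro h
  have h0 := C_av C e
  have h1 := C_bv C e
  rw [h, h1] at h0
  exact absurd h0 (by decide)

end Endpoints

/-! ### rank functions -/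

/-- ascending rank on `V` -/
def rV (v : V) : ℕ := (Fintype.equivFin V v : ℕ)

/-- descending rank on `V` -/
def rV' (v : V) : ℕ := Fintype.card V - 1 - rV v

/-- ascending rank on edges -/
def rE (e : X.edgeSet) : ℕ := (Fintype.equivFin X.edgeSet e : ℕ)

/-- descending rank on edges -/
def rE' (e : X.edgeSet) : ℕ := Fintype.card X.edgeSet - 1 - rE e

/-- rank of the intermediate vertices -/
def rQ (q : Qt X) : ℕ := (Fintype.equivFin (Qt X) q : ℕ)

lemma rV_inj : Function.Injective (rV (V := V)) := fun a b h =>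
  (Fintype.equivFin V).injective (Fin.ext h)

lemma rE_inj : Function.Injective (rE (X := X)) := fun a b h =>
  (Fintype.equivFin X.edgeSet).injective (Fin.ext h)

lemma rQ_inj : Function.Injective (rQ (X := X)) := fun a b h =>
  (Fintype.equivFin (Qt X)).injective (Fin.ext h)

lemma flip_rV {u v : V} (h : u ≠ v) : rV u < rV v ∨ rV' u < rV' v := by
  have h1 : rV u ≠ rV v := fun hh => h (rV_inj hh)
  have h2 : rV u < Fintype.card V := (Fintype.equivFin V u).isLt
  have h3 : rV v < Fintype.card V := (Fintype.equivFin V v).isLt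
  unfold rV'; omega

lemma flip_rE {e e' : X.edgeSet} (h : e ≠ e') : rE e < rE e' ∨ rE' e < rE' e' := by
  have h1 : rE e ≠ rE e' := fun hh => h (rE_inj hh)
  have h2 : rE e < Fintype.card X.edgeSet := (Fintype.equivFin X.edgeSet e).isLt
  have h3 : rE e' < Fintype.card X.edgeSet := (Fintype.equivFin X.edgeSet e').isLt
  unfold rE'; omega

lemma rV'_inj : Function.Injective (rV' (V := V)) := by
  intro a b h
  by_contra hne
  rcases flip_rV hne with h1 | h1
  · rcases flip_rV (Ne.symm hne) with h2 | h2
    · omega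
    · omega
  · omega

lemma rE'_inj : Function.Injective (rE' (X := X)) := by
  intro a b h
  by_contra hne
  rcases flip_rE hne with h1 | h1
  · rcases flip_rE (Ne.symm hne) with h2 | h2
    · omega
    · omega
  · omega

/-! ### the lexicographic targets -/

/-- target of the rank map for `P ∪ R` vertices -/
abbrev Rk : Type := Lex ((Fin 3) × Lex (ℕ × ℕ))

/-- target of the key map -/
abbrev Kt : Type := Lex (Rk × ℕ)

lemma NN_lt_fst {a b s t : ℕ} (h : a < b) : (toLex (a, s) : Lex (ℕ × ℕ)) < toLex (b, t) :=
  Prod.Lex.lt_iff.2 (Or.inl h)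

lemma NN_lt_snd {a s t : ℕ} (h : s < t) : (toLex (a, s) : Lex (ℕ × ℕ)) < toLex (a, t) :=
  Prod.Lex.lt_iff.2 (Or.inr ⟨rfl, h⟩)

lemma Rk_lt_fst {a b : Fin 3} (h : a < b) (s t : Lex (ℕ × ℕ)) :
    (toLex (a, s) : Rk) < toLex (b, t) :=
  Prod.Lex.lt_iff.2 (Or.inl h)

lemma Rk_lt_snd {a : Fin 3} {s t : Lex (ℕ × ℕ)} (h : s < t) :
    (toLex (a, s) : Rk) < toLex (a, t) :=
  Prod.Lex.lt_iff.2 (Or.inr ⟨rfl, h⟩)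

lemma Kt_lt_fst {x y : Rk} (h : x < y) (s t : ℕ) :
    (toLex (x, s) : Kt) < toLex (y, t) :=
  Prod.Lex.lt_iff.2 (Or.inl h)

lemma Kt_lt_of_le {x y : Rk} (h : x ≤ y) (t : ℕ) :
    (toLex (x, 0) : Kt) < toLex (y, t + 1) := by
  rcases h.lt_or_eq with h | rfl
  · exact Kt_lt_fst h _ _
  · exact Prod.Lex.lt_iff.2 (Or.inr ⟨rfl, Nat.succ_pos t⟩)

/-! ### generic order construction -/

section Generic

variable (C : X.Coloring (Fin 2))

/-- the rank of lower (`P`- and `R`-) vertices, given parameters: `f` a rank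
of vertices, `g` a rank of edges, `anc` an anchoring endpoint for each edge,
`κ` the color placed in the first block. -/
def rk (f : V → ℕ) (g : X.edgeSet → ℕ) (anc : X.edgeSet → V) (κ : Fin 2) :
    V ⊕ X.edgeSet → Rk
  | Sum.inl v => toLex (if C v = κ then 0 else 2, toLex (f v, 0))
  | Sum.inr e => toLex (1, toLex (f (anc e), g e))

/-- the key of any vertex of `C_X` -/
def ky (f : V → ℕ) (g : X.edgeSet → ℕ) (anc : X.edgeSet → V) (κ : Fin 2) :
    V ⊕ (Qt X ⊕ X.edgeSet) → Kt
  | Sum.inl v => toLex (rk C f g anc κ (Sum.inl v), 0)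
  | Sum.inr (Sum.inl q) =>
      toLex (max (rk C f g anc κ (Sum.inl q.1.1)) (rk C f g anc κ (Sum.inr q.1.2)), rQ q + 1)
  | Sum.inr (Sum.inr r) => toLex (rk C f g anc κ (Sum.inr r), 0)

variable {f : V → ℕ} {g : X.edgeSet → ℕ} {anc : X.edgeSet → V} {κ : Fin 2}

lemma rk_inj (hf : Function.Injective f) (hg : Function.Injective g) :
    Function.Injective (rk C f g anc κ) := by
  rintro (v | e) (u | e') h <;> simp only [rk, toLex_inj, Prod.mk.injEq] at h
  · exact congrArg Sum.inl (hf h.2.1)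
  · exfalso; revert h; split <;> simp
  · exfalso; revert h; split <;> simp
  · exact congrArg Sum.inr (hg h.2.2)

lemma ky_inj (hf : Function.Injective f) (hg : Function.Injective g) :
    Function.Injective (ky C f g anc κ) := by
  rintro (v | (q | r)) (u | (q' | r')) h <;>
    simp only [ky, toLex_inj, Prod.mk.injEq] at h
  · have := rk_inj C hf hg h.1; exact congrArg Sum.inl (Sum.inl.inj this)
  · exact absurd h.2 (by omega)
  · have := rk_inj C hf hg h.1; simp at this
  · exact absurd h.2 (by omega)
  · exact congrArg (Sum.inr ∘ Sum.inl) (rQ_inj (by omega))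
  · exact absurd h.2 (by omega)
  · have := rk_inj C hf hg h.1; simp at this
  · exact absurd h.2 (by omega)
  · have := rk_inj C hf hg h.1; exact congrArg (Sum.inr ∘ Sum.inr) (Sum.inr.inj this)

end Generic

/-! ### the four orders -/

section Four

variable (C : X.Coloring (Fin 2))

/-- the four rank functions -/
def rnk : Fin 4 → (V ⊕ X.edgeSet) → Rk
  | ⟨0, _⟩ => rk C rV rE (av C) 0
  | ⟨1, _⟩ => rk C rV' rE' (av C) 0
  | ⟨2, _⟩ => rk C rV rE (bv C) 1
  | ⟨3, _⟩ => rk C rV' rE' (bv C) 1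

/-- the four key functions -/
def key : Fin 4 → V ⊕ (Qt X ⊕ X.edgeSet) → Kt
  | ⟨0, _⟩ => ky C rV rE (av C) 0
  | ⟨1, _⟩ => ky C rV' rE' (av C) 0
  | ⟨2, _⟩ => ky C rV rE (bv C) 1
  | ⟨3, _⟩ => ky C rV' rE' (bv C) 1

lemma key_inj (i : Fin 4) : Function.Injective (key C i) := by
  match i with
  | ⟨0, _⟩ => exact ky_inj C rV_inj rE_inj
  | ⟨1, _⟩ => exact ky_inj C rV'_inj rE'_inj
  | ⟨2, _⟩ => exact ky_inj C rV_inj rE_inj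
  | ⟨3, _⟩ => exact ky_inj C rV'_inj rE'_inj

lemma key_P (i : Fin 4) (v : V) :
    key C i (Sum.inl v) = toLex (rnk C i (Sum.inl v), 0) := by
  match i with
  | ⟨0, _⟩ | ⟨1, _⟩ | ⟨2, _⟩ | ⟨3, _⟩ => rfl

lemma key_R (i : Fin 4) (r : X.edgeSet) :
    key C i (Sum.inr (Sum.inr r)) = toLex (rnk C i (Sum.inr r), 0) := by
  match i with
  | ⟨0, _⟩ | ⟨1, _⟩ | ⟨2, _⟩ | ⟨3, _⟩ => rfl

lemma key_Q (i : Fin 4) (q : Qt X) :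
    key C i (Sum.inr (Sum.inl q)) =
      toLex (max (rnk C i (Sum.inl q.1.1)) (rnk C i (Sum.inr q.1.2)), rQ q + 1) := by
  match i with
  | ⟨0, _⟩ | ⟨1, _⟩ | ⟨2, _⟩ | ⟨3, _⟩ => rfl

end Four


lemma rnk0 (C : X.Coloring (Fin 2)) : rnk C 0 = rk C rV rE (av C) 0 := rfl
lemma rnk1 (C : X.Coloring (Fin 2)) : rnk C 1 = rk C rV' rE' (av C) 0 := rfl
lemma rnk2 (C : X.Coloring (Fin 2)) : rnk C 2 = rk C rV rE (bv C) 1 := rfl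
lemma rnk3 (C : X.Coloring (Fin 2)) : rnk C 3 = rk C rV' rE' (bv C) 1 := rfl

/-! ### the four existential rank lemmas -/

section Exist

variable (C : X.Coloring (Fin 2))

lemma rnk_V_V (u v : V) (h : u ≠ v) :
    ∃ i, rnk C i (Sum.inl u) < rnk C i (Sum.inl v) := by
  by_cases hc : C u = C v
  · rcases flip_rV h with h1 | h1
    · refine ⟨0, ?_⟩
      rw [rnk0]
      simp only [rk]; rw [hc]
      exact Rk_lt_snd (NN_lt_fst h1)
    · refine ⟨1, ?_⟩
      rw [rnk1]
      simp only [rk]; rw [hc]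
      exact Rk_lt_snd (NN_lt_fst h1)
  · rcases two_cases (C u) with h0 | h0
    · refine ⟨0, ?_⟩
      rw [rnk0]
      simp only [rk]
      rw [if_pos h0, if_neg (by rw [← h0]; exact fun hh => hc hh.symm)]
      exact Rk_lt_fst (by decide) _ _
    · refine ⟨2, ?_⟩
      rw [rnk2]
      simp only [rk]
      rw [if_pos h0, if_neg (by rw [← h0]; exact fun hh => hc hh.symm)]
      exact Rk_lt_fst (by decide) _ _

lemma crit_V (v : V) (e : X.edgeSet) (hv : v = av C e ∨ v = bv C e) (u : V)
    (hu : u ≠ v) :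
    ∃ i, rnk C i (Sum.inl v) < rnk C i (Sum.inl u) ∧
      rnk C i (Sum.inr e) < rnk C i (Sum.inl u) := by
  rcases hv with rfl | rfl
  · have hcv : C (av C e) = 0 := C_av C e
    rcases two_cases (C u) with h0 | h0
    · -- same color 0 : use κ = 1 orders
      rcases flip_rV (Ne.symm hu) with h1 | h1
      · refine ⟨2, ?_, ?_⟩ <;>
          rw [rnk2] <;> simp only [rk]
        · rw [if_neg (by simp [hcv]), if_neg (by simp [h0])]
          exact Rk_lt_snd (NN_lt_fst h1)
        · rw [if_neg (by simp [h0])]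
          exact Rk_lt_fst (by decide) _ _
      · refine ⟨3, ?_, ?_⟩ <;>
          rw [rnk3] <;> simp only [rk]
        · rw [if_neg (by simp [hcv]), if_neg (by simp [h0])]
          exact Rk_lt_snd (NN_lt_fst h1)
        · rw [if_neg (by simp [h0])]
          exact Rk_lt_fst (by decide) _ _
    · refine ⟨0, ?_, ?_⟩ <;>
        rw [rnk0] <;> simp only [rk]
      · rw [if_pos hcv, if_neg (by simp [h0])]
        exact Rk_lt_fst (by decide) _ _
      · rw [if_neg (by simp [h0])]
        exact Rk_lt_fst (by decide) _ _
  · have hcv : C (bv C e) = 1 := C_bv C e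
    rcases two_cases (C u) with h0 | h0
    · refine ⟨2, ?_, ?_⟩ <;>
        rw [rnk2] <;> simp only [rk]
      · rw [if_pos hcv, if_neg (by simp [h0])]
        exact Rk_lt_fst (by decide) _ _
      · rw [if_neg (by simp [h0])]
        exact Rk_lt_fst (by decide) _ _
    · rcases flip_rV (Ne.symm hu) with h1 | h1
      · refine ⟨0, ?_, ?_⟩ <;>
          rw [rnk0] <;> simp only [rk]
        · rw [if_neg (by simp [hcv]), if_neg (by simp [h0])]
          exact Rk_lt_snd (NN_lt_fst h1)
        · rw [if_neg (by simp [h0])]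
          exact Rk_lt_fst (by decide) _ _
      · refine ⟨1, ?_, ?_⟩ <;>
          rw [rnk1] <;> simp only [rk]
        · rw [if_neg (by simp [hcv]), if_neg (by simp [h0])]
          exact Rk_lt_snd (NN_lt_fst h1)
        · rw [if_neg (by simp [h0])]
          exact Rk_lt_fst (by decide) _ _

lemma rnk_E_E (r e : X.edgeSet) (h : r ≠ e) :
    ∃ i, rnk C i (Sum.inr r) < rnk C i (Sum.inr e) := by
  by_cases ha : av C r = av C e
  · rcases flip_rE h with h1 | h1
    · refine ⟨0, ?_⟩
      rw [rnk0]
      simp only [rk]; rw [ha]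
      exact Rk_lt_snd (NN_lt_snd h1)
    · refine ⟨1, ?_⟩
      rw [rnk1]
      simp only [rk]; rw [ha]
      exact Rk_lt_snd (NN_lt_snd h1)
  · rcases flip_rV ha with h1 | h1
    · refine ⟨0, ?_⟩
      rw [rnk0]
      simp only [rk]
      exact Rk_lt_snd (NN_lt_fst h1)
    · refine ⟨1, ?_⟩
      rw [rnk1]
      simp only [rk]
      exact Rk_lt_snd (NN_lt_fst h1)

lemma crit_E (v : V) (e : X.edgeSet) (hv : v = av C e ∨ v = bv C e)
    (r : X.edgeSet) (hr : e ≠ r) :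
    ∃ i, rnk C i (Sum.inl v) < rnk C i (Sum.inr r) ∧
      rnk C i (Sum.inr e) < rnk C i (Sum.inr r) := by
  rcases hv with rfl | rfl
  · have hcv : C (av C e) = 0 := C_av C e
    by_cases ha : av C e = av C r
    · rcases flip_rE hr with h1 | h1
      · refine ⟨0, ?_, ?_⟩ <;>
          rw [rnk0] <;> simp only [rk]
        · rw [if_pos hcv]; exact Rk_lt_fst (by decide) _ _
        · rw [ha]; exact Rk_lt_snd (NN_lt_snd h1)
      · refine ⟨1, ?_, ?_⟩ <;>
          rw [rnk1] <;> simp only [rk]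
        · rw [if_pos hcv]; exact Rk_lt_fst (by decide) _ _
        · rw [ha]; exact Rk_lt_snd (NN_lt_snd h1)
    · rcases flip_rV ha with h1 | h1
      · refine ⟨0, ?_, ?_⟩ <;>
          rw [rnk0] <;> simp only [rk]
        · rw [if_pos hcv]; exact Rk_lt_fst (by decide) _ _
        · exact Rk_lt_snd (NN_lt_fst h1)
      · refine ⟨1, ?_, ?_⟩ <;>
          rw [rnk1] <;> simp only [rk]
        · rw [if_pos hcv]; exact Rk_lt_fst (by decide) _ _
        · exact Rk_lt_snd (NN_lt_fst h1)
  · have hcv : C (bv C e) = 1 := C_bv C e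
    by_cases ha : bv C e = bv C r
    · rcases flip_rE hr with h1 | h1
      · refine ⟨2, ?_, ?_⟩ <;>
          rw [rnk2] <;> simp only [rk]
        · rw [if_pos hcv]; exact Rk_lt_fst (by decide) _ _
        · rw [ha]; exact Rk_lt_snd (NN_lt_snd h1)
      · refine ⟨3, ?_, ?_⟩ <;>
          rw [rnk3] <;> simp only [rk]
        · rw [if_pos hcv]; exact Rk_lt_fst (by decide) _ _
        · rw [ha]; exact Rk_lt_snd (NN_lt_snd h1)
    · rcases flip_rV ha with h1 | h1
      · refine ⟨2, ?_, ?_⟩ <;>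
          rw [rnk2] <;> simp only [rk]
        · rw [if_pos hcv]; exact Rk_lt_fst (by decide) _ _
        · exact Rk_lt_snd (NN_lt_fst h1)
      · refine ⟨3, ?_, ?_⟩ <;>
          rw [rnk3] <;> simp only [rk]
        · rw [if_pos hcv]; exact Rk_lt_fst (by decide) _ _
        · exact Rk_lt_snd (NN_lt_fst h1)

lemma rnk_V_E (v : V) (e : X.edgeSet) :
    ∃ i, rnk C i (Sum.inl v) < rnk C i (Sum.inr e) := by
  rcases two_cases (C v) with h0 | h0
  · refine ⟨0, ?_⟩
    rw [rnk0]
    simp only [rk]; rw [if_pos h0]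
    exact Rk_lt_fst (by decide) _ _
  · refine ⟨2, ?_⟩
    rw [rnk2]
    simp only [rk]; rw [if_pos h0]
    exact Rk_lt_fst (by decide) _ _

lemma rnk_E_V (e : X.edgeSet) (v : V) :
    ∃ i, rnk C i (Sum.inr e) < rnk C i (Sum.inl v) := by
  rcases two_cases (C v) with h0 | h0
  · refine ⟨2, ?_⟩
    rw [rnk2]
    simp only [rk]; rw [if_neg (by simp [h0])]
    exact Rk_lt_fst (by decide) _ _
  · refine ⟨0, ?_⟩
    rw [rnk0]
    simp only [rk]; rw [if_neg (by simp [h0])]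
    exact Rk_lt_fst (by decide) _ _

end Exist


/-! ### key-level comparison lemmas -/

section KeyLemmas

variable (C : X.Coloring (Fin 2))

lemma key_fwd_P (i : Fin 4) (q : Qt X) :
    key C i (Sum.inl q.1.1) < key C i (Sum.inr (Sum.inl q)) := by
  rw [key_P, key_Q]
  exact Kt_lt_of_le (le_max_left _ _) _

lemma key_fwd_R (i : Fin 4) (q : Qt X) :
    key C i (Sum.inr (Sum.inr q.1.2)) < key C i (Sum.inr (Sum.inl q)) := by
  rw [key_R, key_Q]
  exact Kt_lt_of_le (le_max_right _ _) _

lemma key_P_P (u v : V) (h : u ≠ v) :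
    ∃ i, key C i (Sum.inl u) < key C i (Sum.inl v) := by
  obtain ⟨i, hi⟩ := rnk_V_V C u v h
  exact ⟨i, by rw [key_P, key_P]; exact Kt_lt_fst hi _ _⟩

lemma key_R_R (r r' : X.edgeSet) (h : r ≠ r') :
    ∃ i, key C i (Sum.inr (Sum.inr r)) < key C i (Sum.inr (Sum.inr r')) := by
  obtain ⟨i, hi⟩ := rnk_E_E C r r' h
  exact ⟨i, by rw [key_R, key_R]; exact Kt_lt_fst hi _ _⟩

lemma key_P_R (v : V) (r : X.edgeSet) :
    ∃ i, key C i (Sum.inl v) < key C i (Sum.inr (Sum.inr r)) := by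
  obtain ⟨i, hi⟩ := rnk_V_E C v r
  exact ⟨i, by rw [key_P, key_R]; exact Kt_lt_fst hi _ _⟩

lemma key_R_P (r : X.edgeSet) (v : V) :
    ∃ i, key C i (Sum.inr (Sum.inr r)) < key C i (Sum.inl v) := by
  obtain ⟨i, hi⟩ := rnk_E_V C r v
  exact ⟨i, by rw [key_P, key_R]; exact Kt_lt_fst hi _ _⟩

lemma key_P_Q (u : V) (q : Qt X) (h : u ≠ q.1.1) :
    ∃ i, key C i (Sum.inl u) < key C i (Sum.inr (Sum.inl q)) := by
  obtain ⟨i, hi⟩ := rnk_V_V C u q.1.1 h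
  refine ⟨i, ?_⟩
  rw [key_P, key_Q]
  exact Kt_lt_of_le (le_of_lt (lt_of_lt_of_le hi (le_max_left _ _))) _

lemma key_Q_P (q : Qt X) (u : V) (h : u ≠ q.1.1) :
    ∃ i, key C i (Sum.inr (Sum.inl q)) < key C i (Sum.inl u) := by
  obtain ⟨i, h1, h2⟩ := crit_V C q.1.1 q.1.2 (mem_av_bv C q.1.2 q.2) u h
  refine ⟨i, ?_⟩
  rw [key_P, key_Q]
  exact Kt_lt_fst (max_lt h1 h2) _ _

lemma key_R_Q (r : X.edgeSet) (q : Qt X) (h : q.1.2 ≠ r) :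
    ∃ i, key C i (Sum.inr (Sum.inr r)) < key C i (Sum.inr (Sum.inl q)) := by
  obtain ⟨i, hi⟩ := rnk_E_E C r q.1.2 (fun hh => h hh.symm)
  refine ⟨i, ?_⟩
  rw [key_R, key_Q]
  exact Kt_lt_of_le (le_of_lt (lt_of_lt_of_le hi (le_max_right _ _))) _

lemma key_Q_R (q : Qt X) (r : X.edgeSet) (h : q.1.2 ≠ r) :
    ∃ i, key C i (Sum.inr (Sum.inl q)) < key C i (Sum.inr (Sum.inr r)) := by
  obtain ⟨i, h1, h2⟩ := crit_E C q.1.1 q.1.2 (mem_av_bv C q.1.2 q.2) r h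
  refine ⟨i, ?_⟩
  rw [key_R, key_Q]
  exact Kt_lt_fst (max_lt h1 h2) _ _

lemma key_Q_Q (q q' : Qt X) (h : q ≠ q') :
    ∃ i, key C i (Sum.inr (Sum.inl q)) < key C i (Sum.inr (Sum.inl q')) := by
  by_cases h1 : q'.1.1 = q.1.1
  · have h2 : q.1.2 ≠ q'.1.2 := by
      intro h2
      exact h (Subtype.ext (Prod.ext h1.symm h2))
    obtain ⟨i, hv, he⟩ := crit_E C q.1.1 q.1.2 (mem_av_bv C q.1.2 q.2) q'.1.2 h2
    refine ⟨i, ?_⟩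
    calc key C i (Sum.inr (Sum.inl q))
        < key C i (Sum.inr (Sum.inr q'.1.2)) := by
          rw [key_R, key_Q]; exact Kt_lt_fst (max_lt hv he) _ _
      _ < key C i (Sum.inr (Sum.inl q')) := key_fwd_R C i q'
  · obtain ⟨i, hv, he⟩ := crit_V C q.1.1 q.1.2 (mem_av_bv C q.1.2 q.2) q'.1.1 h1
    refine ⟨i, ?_⟩
    calc key C i (Sum.inr (Sum.inl q))
        < key C i (Sum.inl q'.1.1) := by
          rw [key_P, key_Q]; exact Kt_lt_fst (max_lt hv he) _ _
      _ < key C i (Sum.inr (Sum.inl q')) := key_fwd_P C i q'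

end KeyLemmas

end CXProof

end CXProof

/-- If `X` is a finite bipartite graph, then `C_X` is the comparability graph
of the intersection of four linear orders; i.e. `C_X` has order dimension at
most `4`. -/
theorem CX_of_bipartite_dim_le_four {V : Type} [Fintype V] (X : SimpleGraph V)
    (hbip : X.Colorable 2) :
    ∃ L : Fin 4 → LinearOrder (CXVert X),
      ∀ a b : CXVert X, (CX X).Adj a b ↔
        (a ≠ b ∧ ((∀ i, (L i).le a b) ∨ (∀ i, (L i).le b a))) := by
  classical
  obtain ⟨C⟩ := hbip
  refine ⟨fun i => LinearOrder.lift' (CXProof.key C i) (CXProof.key_inj C i), fun a b => ?_⟩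
  have hle : ∀ (i : Fin 4) (x y : CXVert X),
      (LinearOrder.lift' (CXProof.key C i) (CXProof.key_inj C i)).le x y ↔
        CXProof.key C i x ≤ CXProof.key C i y := fun _ _ _ => Iff.rfl
  rw [CX, SimpleGraph.fromRel_adj]
  constructor
  · rintro ⟨hne, hrel⟩
    refine ⟨hne, ?_⟩
    cases a with
    | inl v =>
      cases b with
      | inl v' => exact absurd hrel (by simp)
      | inr b' =>
        cases b' with
        | inl q' =>
          have hv : v = q'.1.1 := by
            rcases hrel with h | h
            · exact h
            · exact h.elim
          subst hv
          exact Or.inl fun i => (hle i _ _).2 (le_of_lt (CXProof.key_fwd_P C i q'))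
        | inr r' => exact absurd hrel (by simp)
    | inr a' =>
      cases a' with
      | inl q =>
        cases b with
        | inl v' =>
          have hv : v' = q.1.1 := by
            rcases hrel with h | h
            · exact h.elim
            · exact h
          subst hv
          exact Or.inr fun i => (hle i _ _).2 (le_of_lt (CXProof.key_fwd_P C i q))
        | inr b' =>
          cases b' with
          | inl q' => exact absurd hrel (by simp)
          | inr r' =>
            have hv : q.1.2 = r' := by
              rcases hrel with h | h
              · exact h
              · exact h.elim
            subst hv
            exact Or.inr fun i => (hle i _ _).2 (le_of_lt (CXProof.key_fwd_R C i q))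
      | inr r =>
        cases b with
        | inl v' => exact absurd hrel (by simp)
        | inr b' =>
          cases b' with
          | inl q' =>
            have hv : q'.1.2 = r := by
              rcases hrel with h | h
              · exact h.elim
              · exact h
            subst hv
            exact Or.inl fun i => (hle i _ _).2 (le_of_lt (CXProof.key_fwd_R C i q'))
          | inr r' => exact absurd hrel (by simp)
  · rintro ⟨hne, hor⟩
    refine ⟨hne, ?_⟩
    by_contra hcon
    rw [not_or] at hcon
    obtain ⟨hab, hba⟩ := hcon
    have hx : (∃ i, CXProof.key C i b < CXProof.key C i a) ∧
        (∃ i, CXProof.key C i a < CXProof.key C i b) := by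
      clear hor
      cases a with
      | inl v =>
        cases b with
        | inl v' =>
          have hv : v ≠ v' := fun h => hne (congrArg Sum.inl h)
          exact ⟨CXProof.key_P_P C v' v (Ne.symm hv), CXProof.key_P_P C v v' hv⟩
        | inr b' =>
          cases b' with
          | inl q' =>
            have hv : v ≠ q'.1.1 := fun h => hab h
            exact ⟨CXProof.key_Q_P C q' v hv, CXProof.key_P_Q C v q' hv⟩
          | inr r' => exact ⟨CXProof.key_R_P C r' v, CXProof.key_P_R C v r'⟩
      | inr a' =>
        cases a' with
        | inl q =>
          cases b with
          | inl v' =>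
            have hv : v' ≠ q.1.1 := fun h => hba h
            exact ⟨CXProof.key_P_Q C v' q hv, CXProof.key_Q_P C q v' hv⟩
          | inr b' =>
            cases b' with
            | inl q' =>
              have hq : q ≠ q' := fun h => hne (congrArg (fun x => Sum.inr (Sum.inl x)) h)
              exact ⟨CXProof.key_Q_Q C q' q (Ne.symm hq), CXProof.key_Q_Q C q q' hq⟩
            | inr r' =>
              have hv : q.1.2 ≠ r' := fun h => hab h
              exact ⟨CXProof.key_R_Q C r' q hv, CXProof.key_Q_R C q r' hv⟩
        | inr r =>
          cases b with
          | inl v' => exact ⟨CXProof.key_P_R C v' r, CXProof.key_R_P C r v'⟩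
          | inr b' =>
            cases b' with
            | inl q' =>
              have hv : q'.1.2 ≠ r := fun h => hba h
              exact ⟨CXProof.key_Q_R C q' r hv, CXProof.key_R_Q C r q' hv⟩
            | inr r' =>
              have hr : r ≠ r' := fun h => hne (congrArg (fun x => Sum.inr (Sum.inr x)) h)
              exact ⟨CXProof.key_R_R C r' r (Ne.symm hr), CXProof.key_R_R C r r' hr⟩
    rcases hor with hO | hO
    · obtain ⟨i, hi⟩ := hx.1
      exact absurd ((hle i a b).1 (hO i)) (not_le.2 hi)
    · obtain ⟨i, hi⟩ := hx.2
      exact absurd ((hle i b a).1 (hO i)) (not_le.2 hi)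
end
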